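/- arXiv:2211.11464 — 4 statements merged into one kernel-verified Lean document; each statement's English description precedes it below -/
import Mathlib

section
/- Let u : ℝⁿ → ℝ be C¹ with Lipschitz gradient on a convex open set U, let x′, x ∈ U with ∇u(x′) = 0 and x ≠ x′, and suppose: (i) |∇²u(z) − A| ≤ ε for a.e. z on the segment [x′,x], where A is a symmetric matrix with A·(x−x′) = −λ(x−x′) for some λ > 0 and ‖A‖ ≤ Λ; (ii) |∇u(x)/|∇u(x)| + (x−x′)/|x−x′|| ≤ ε. Then |∇u(x)| ≥ (λ − ε(1 + Λ))·|x − x′|. -/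
open Metric Set RealInnerProductSpace

/-- Gradient lower bound near a critical point whose Hessian is close to a
symmetric map `A` having `x - x'` as an eigenvector with eigenvalue `-λ`. -/
theorem stmt_2 (n : ℕ) (u : EuclideanSpace ℝ (Fin n) → ℝ)
    (U : Set (EuclideanSpace ℝ (Fin n))) (hU : IsOpen U) (hUconv : Convex ℝ U)
    (hC2 : ContDiffOn ℝ 2 u U)
    (x' x : EuclideanSpace ℝ (Fin n)) (hx' : x' ∈ U) (hx : x ∈ U) (hne : x ≠ x')
    (hgrad0 : gradient u x' = 0)
    (A : EuclideanSpace ℝ (Fin n) →L[ℝ] EuclideanSpace ℝ (Fin n))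
    (hAsymm : ∀ v w, ⟪A v, w⟫ = ⟪v, A w⟫)
    (lam Λ ε : ℝ) (hlam : 0 < lam)
    (heig : A (x - x') = -lam • (x - x')) (hA : ‖A‖ ≤ Λ)
    (hHess : ∀ z ∈ segment ℝ x' x, ‖fderiv ℝ (gradient u) z - A‖ ≤ ε)
    (hdir : ‖‖gradient u x‖⁻¹ • gradient u x + ‖x - x'‖⁻¹ • (x - x')‖ ≤ ε) :
    ‖gradient u x‖ ≥ (lam - ε * (1 + Λ)) * ‖x - x'‖ := by
  set v := x - x' with hv
  have hvne : v ≠ 0 := sub_ne_zero.mpr hne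
  have hvpos : (0:ℝ) < ‖v‖ := norm_pos_iff.mpr hvne
  have hε : (0:ℝ) ≤ ε := le_trans (norm_nonneg _) hdir
  have hΛ : (0:ℝ) ≤ Λ := le_trans (norm_nonneg _) hA
  -- differentiability of the gradient on U
  have hdiffgrad : ∀ z ∈ U, DifferentiableAt ℝ (gradient u) z := by
    intro z hz
    have h1 : ContDiffAt ℝ 2 u z := hC2.contDiffAt (hU.mem_nhds hz)
    have h2 : ContDiffAt ℝ 1 (fderiv ℝ u) z := h1.fderiv_right (by norm_num)
    have h3 : DifferentiableAt ℝ (fderiv ℝ u) z := h2.differentiableAt one_ne_zero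
    have : gradient u = fun w =>
        (InnerProductSpace.toDual ℝ (EuclideanSpace ℝ (Fin n))).symm (fderiv ℝ u w) := rfl
    rw [this]
    exact (InnerProductSpace.toDual ℝ
      (EuclideanSpace ℝ (Fin n))).symm.toContinuousLinearEquiv.differentiableAt.comp z h3
  -- the path
  set γ : ℝ → EuclideanSpace ℝ (Fin n) := fun t => x' + t • v with hγ
  have hγmem : ∀ t ∈ Icc (0:ℝ) 1, γ t ∈ segment ℝ x' x := by
    intro t ht
    rw [segment_eq_image']
    exact ⟨t, ht, rfl⟩
  have hγU : ∀ t ∈ Icc (0:ℝ) 1, γ t ∈ U := fun t ht =>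
    hUconv.segment_subset hx' hx (hγmem t ht)
  -- the scalar function
  set f : ℝ → ℝ := fun t => ⟪gradient u (γ t), v⟫ + (lam - ε) * ‖v‖^2 * t with hf
  set f' : ℝ → ℝ := fun t => ⟪fderiv ℝ (gradient u) (γ t) v, v⟫ + (lam - ε) * ‖v‖^2 with hf'
  have hderiv : ∀ t ∈ Icc (0:ℝ) 1, HasDerivAt f (f' t) t := by
    intro t ht
    have hγd : HasDerivAt γ v t := by
      have := ((hasDerivAt_id t).smul_const v).const_add x'
      simpa [hγ] using this
    have hgd : HasFDerivAt (gradient u) (fderiv ℝ (gradient u) (γ t)) (γ t) :=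
      (hdiffgrad _ (hγU t ht)).hasFDerivAt
    have hcomp : HasDerivAt (fun s => gradient u (γ s)) (fderiv ℝ (gradient u) (γ t) v) t :=
      hgd.comp_hasDerivAt t hγd
    have hinner : HasDerivAt (fun s => ⟪gradient u (γ s), v⟫)
        (⟪fderiv ℝ (gradient u) (γ t) v, v⟫) t := by
      have := hcomp.inner ℝ (hasDerivAt_const t v)
      simpa using this
    have hlin : HasDerivAt (fun s => (lam - ε) * ‖v‖^2 * s) ((lam - ε) * ‖v‖^2) t := by
      simpa using (hasDerivAt_id t).const_mul ((lam - ε) * ‖v‖^2)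
    exact hinner.add hlin
  have hderivle : ∀ t ∈ Icc (0:ℝ) 1, f' t ≤ 0 := by
    intro t ht
    set H := fderiv ℝ (gradient u) (γ t) with hH
    have h1 : ⟪H v, v⟫ = ⟪(H - A) v, v⟫ + ⟪A v, v⟫ := by
      rw [← inner_add_left]
      congr 1
      simp
    have h2 : ⟪A v, v⟫ = -lam * ‖v‖^2 := by
      rw [heig, real_inner_smul_left, real_inner_self_eq_norm_sq]
    have h3 : ⟪(H - A) v, v⟫ ≤ ε * ‖v‖^2 := by
      calc ⟪(H - A) v, v⟫ ≤ ‖(H - A) v‖ * ‖v‖ := real_inner_le_norm _ _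
        _ ≤ (‖H - A‖ * ‖v‖) * ‖v‖ :=
          mul_le_mul_of_nonneg_right ((H - A).le_opNorm v) (norm_nonneg v)
        _ ≤ (ε * ‖v‖) * ‖v‖ := by
          have := hHess (γ t) (hγmem t ht)
          nlinarith [norm_nonneg v]
        _ = ε * ‖v‖^2 := by ring
    have : f' t = ⟪H v, v⟫ + (lam - ε) * ‖v‖^2 := rfl
    rw [this, h1, h2]
    nlinarith
  have hcont : ContinuousOn f (Icc 0 1) := fun t ht =>
    (hderiv t ht).continuousAt.continuousWithinAt
  have hanti : AntitoneOn f (Icc (0:ℝ) 1) := by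
    apply antitoneOn_of_hasDerivWithinAt_nonpos (convex_Icc 0 1) hcont
      (f' := f')
    · intro t ht
      exact (hderiv t (interior_subset ht)).hasDerivWithinAt
    · intro t ht
      exact hderivle t (interior_subset ht)
  have hf10 : f 1 ≤ f 0 := hanti (by norm_num) (by norm_num) zero_le_one
  have hγ0 : γ 0 = x' := by simp [hγ]
  have hγ1 : γ 1 = x := by simp [hγ, hv]
  have hkey : ⟪gradient u x, v⟫ + (lam - ε) * ‖v‖^2 ≤ 0 := by
    have h0 : f 0 = 0 := by simp only [hf, hγ0, hgrad0]; simp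
    have h1 : f 1 = ⟪gradient u x, v⟫ + (lam - ε) * ‖v‖^2 := by
      simp [hf, hγ1]
    rw [h0, h1] at hf10
    exact hf10
  have hcs : ⟪gradient u x, -v⟫ ≤ ‖gradient u x‖ * ‖v‖ := by
    have := real_inner_le_norm (gradient u x) (-v)
    simpa using this
  have hgv : (lam - ε) * ‖v‖^2 ≤ ⟪gradient u x, -v⟫ := by
    rw [inner_neg_right]
    linarith
  have hmain : (lam - ε) * ‖v‖ ≤ ‖gradient u x‖ := by
    have h := le_trans hgv hcs
    rw [sq, ← mul_assoc] at h
    exact le_of_mul_le_mul_right h hvpos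
  have h2 : (lam - ε * (1 + Λ)) * ‖v‖ ≤ (lam - ε) * ‖v‖ := by
    have : lam - ε * (1 + Λ) ≤ lam - ε := by nlinarith [mul_nonneg hε hΛ]
    exact mul_le_mul_of_nonneg_right this (norm_nonneg v)
  linarith
end

section
/- Let u : ℝⁿ → ℝ be C² on B₁ with ‖∇²u‖_{L∞(B₁)} ≤ K, satisfying the Łojasiewicz inequality |u|^{1/2} ≤ β|∇u| on B₁. Let x : [0,s₀] → B₁ be a C¹ unit-speed integral curve of N = ∇u/|∇u| with u(x(0)) ≥ 0. Then x is C² on (0,s₀] and |x″(s)| ≤ 4β²K/s for all s ∈ (0,s₀]. -/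
open Metric Set
open scoped RealInnerProductSpace

private theorem aux_deriv_le {E : Type*} [NormedAddCommGroup E] [NormedSpace ℝ E]
    {f h : ℝ → E} {s : ℝ} {A : E}
    (heq : f =ᶠ[nhdsWithin s (Iic s)] h) (hval : f s = h s) (hh : HasDerivAt h A s) :
    ‖deriv f s‖ ≤ ‖A‖ := by
  by_cases hd : DifferentiableAt ℝ f s
  · have h2 : HasDerivWithinAt f A (Iic s) s :=
      hh.hasDerivWithinAt.congr_of_eventuallyEq heq hval
    have h1 : HasDerivWithinAt f (deriv f s) (Iic s) s := hd.hasDerivAt.hasDerivWithinAt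
    have hu : UniqueDiffWithinAt ℝ (Iic s) s := uniqueDiffOn_Iic s s self_mem_Iic
    rw [← h1.derivWithin hu, h2.derivWithin hu]
  · rw [deriv_zero_of_not_differentiableAt hd]
    simp

private theorem aux_mem_Iic {s : ℝ} (h : 0 < s) : Ioc 0 s ∈ nhdsWithin s (Iic s) :=
  mem_nhdsWithin.2 ⟨Ioi 0, isOpen_Ioi, h, fun t ht => ⟨ht.1, ht.2⟩⟩

set_option maxHeartbeats 1000000 in
/-- Second-derivative estimate along unit-speed integral curves of the
normalized gradient: `|x''(s)| ≤ 4β²K/s`. -/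
theorem stmt_4 (n : ℕ) (u : EuclideanSpace ℝ (Fin n) → ℝ) (β K : ℝ)
    (hβ : 0 < β) (hK : 0 < K)
    (hC2 : ContDiffOn ℝ 2 u (ball 0 1))
    (hHess : ∀ z ∈ ball (0 : EuclideanSpace ℝ (Fin n)) 1,
      ‖fderiv ℝ (gradient u) z‖ ≤ K)
    (hLoj : ∀ y ∈ ball (0 : EuclideanSpace ℝ (Fin n)) 1,
      |u y| ^ ((1 : ℝ) / 2) ≤ β * ‖gradient u y‖)
    (s₀ : ℝ) (hs₀ : 0 < s₀) (x : ℝ → EuclideanSpace ℝ (Fin n))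
    (hmem : ∀ s ∈ Icc 0 s₀, x s ∈ ball (0 : EuclideanSpace ℝ (Fin n)) 1)
    (hode : ∀ s ∈ Icc 0 s₀,
      HasDerivAt x (‖gradient u (x s)‖⁻¹ • gradient u (x s)) s)
    (h0 : 0 ≤ u (x 0)) :
    ContDiffOn ℝ 2 x (Ioc 0 s₀) ∧
    ∀ s ∈ Ioc 0 s₀, ‖deriv (deriv x) s‖ ≤ 4 * β ^ 2 * K / s := by
  classical
  set g : EuclideanSpace ℝ (Fin n) → EuclideanSpace ℝ (Fin n) := gradient u with hgdef
  set v : ℝ → EuclideanSpace ℝ (Fin n) := fun t => ‖g (x t)‖⁻¹ • g (x t) with hvdef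
  set φ : ℝ → ℝ := fun t => u (x t) with hφdef
  set ρ : ℝ → ℝ := fun t => ‖g (x t)‖ with hρdef
  -- g is C¹ on the ball
  have hg1 : ContDiffOn ℝ 1 g (ball (0 : EuclideanSpace ℝ (Fin n)) 1) := by
    have hf : ContDiffOn ℝ 1 (fderiv ℝ u) (ball (0 : EuclideanSpace ℝ (Fin n)) 1) :=
      hC2.fderiv_of_isOpen isOpen_ball (m := 1) le_rfl
    have hcd : ContDiff ℝ 1
        (fun l : (EuclideanSpace ℝ (Fin n) →L[ℝ] ℝ) =>
          (InnerProductSpace.toDual ℝ (EuclideanSpace ℝ (Fin n))).symm l) :=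
      ((InnerProductSpace.toDual ℝ (EuclideanSpace ℝ (Fin n))).symm.toContinuousLinearEquiv :
        (EuclideanSpace ℝ (Fin n) →L[ℝ] ℝ) ≃L[ℝ] EuclideanSpace ℝ (Fin n))
        |>.toContinuousLinearMap.contDiff
    exact hcd.comp_contDiffOn hf
  have hgd : ∀ y ∈ ball (0 : EuclideanSpace ℝ (Fin n)) 1, HasFDerivAt g (fderiv ℝ g y) y :=
    fun y hy =>
    ((hg1.contDiffAt (isOpen_ball.mem_nhds hy)).differentiableAt one_ne_zero).hasFDerivAt
  -- Lipschitz bound for g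
  have hLip : ∀ y ∈ ball (0 : EuclideanSpace ℝ (Fin n)) 1,
      ∀ z ∈ ball (0 : EuclideanSpace ℝ (Fin n)) 1, ‖g y - g z‖ ≤ K * ‖y - z‖ := by
    intro y hy z hz
    exact Convex.norm_image_sub_le_of_norm_fderiv_le
      (fun w hw => (hg1.contDiffAt (isOpen_ball.mem_nhds hw)).differentiableAt one_ne_zero)
      hHess (convex_ball _ _) hz hy
  -- the inner product formula for fderiv of u
  have hinnerf : ∀ t ∈ Icc 0 s₀, ∀ w, fderiv ℝ u (x t) w = ⟪g (x t), w⟫ := by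
    intro t ht w
    rw [hgdef]
    exact (InnerProductSpace.toDual_symm_apply).symm
  -- derivative of φ along the curve
  have hφd : ∀ t ∈ Icc 0 s₀, HasDerivAt φ (ρ t) t := by
    intro t ht
    have hud : HasFDerivAt u (fderiv ℝ u (x t)) (x t) :=
      ((hC2.contDiffAt (isOpen_ball.mem_nhds (hmem t ht))).differentiableAt
        (by norm_num)).hasFDerivAt
    have h1' : HasDerivAt (u ∘ x) (fderiv ℝ u (x t) (v t)) t :=
      hud.comp_hasDerivAt t (hode t ht)
    have h1 : HasDerivAt φ (fderiv ℝ u (x t) (v t)) t := h1'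
    have h2 : fderiv ℝ u (x t) (v t) = ρ t := by
      rw [hinnerf t ht]
      rcases eq_or_ne (g (x t)) 0 with h | h
      · simp [hvdef, hρdef, h]
      · have hn : ‖g (x t)‖ ≠ 0 := norm_ne_zero_iff.2 h
        rw [hvdef]
        simp only [real_inner_smul_right, real_inner_self_eq_norm_mul_norm]
        rw [hρdef]
        field_simp
    rwa [h2] at h1
  -- φ is monotone on [0, s₀]
  have hmono : MonotoneOn φ (Icc 0 s₀) := by
    apply monotoneOn_of_deriv_nonneg (convex_Icc 0 s₀)
    · exact fun t ht => (hφd t ht).continuousAt.continuousWithinAt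
    · intro t ht
      rw [interior_Icc] at ht
      exact (hφd t (Ioo_subset_Icc_self ht)).differentiableAt.differentiableWithinAt
    · intro t ht
      rw [interior_Icc] at ht
      rw [(hφd t (Ioo_subset_Icc_self ht)).deriv]
      exact norm_nonneg _
  have hφ0 : ∀ t ∈ Icc 0 s₀, 0 ≤ φ t := fun t ht =>
    le_trans h0 (hmono ⟨le_rfl, hs₀.le⟩ ht ht.1)
  -- Łojasiewicz along the curve
  have hLoj' : ∀ t ∈ Icc 0 s₀, Real.sqrt (φ t) ≤ β * ρ t := by
    intro t ht
    have h1 := hLoj (x t) (hmem t ht)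
    rw [show φ t = |u (x t)| from (abs_of_nonneg (hφ0 t ht)).symm, Real.sqrt_eq_rpow]
    exact h1
  -- comparison lemma
  have hcomp : ∀ a, 0 ≤ a → a < s₀ → (∀ t ∈ Ioc a s₀, 0 < φ t) →
      ∀ s ∈ Ioc a s₀, (s - a) / (2 * β) ≤ Real.sqrt (φ s) := by
    intro a ha0 has hpos s hs
    have hsub : Icc a s ⊆ Icc 0 s₀ := Icc_subset_Icc ha0 hs.2
    have hmono2 : MonotoneOn (fun t => Real.sqrt (φ t) - (t - a) / (2 * β)) (Icc a s) := by
      apply monotoneOn_of_deriv_nonneg (convex_Icc a s)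
      · apply ContinuousOn.sub
        · exact Real.continuous_sqrt.comp_continuousOn
            (fun t ht => (hφd t (hsub ht)).continuousAt.continuousWithinAt)
        · fun_prop
      · intro t ht
        rw [interior_Icc] at ht
        have htI : t ∈ Icc 0 s₀ := hsub (Ioo_subset_Icc_self ht)
        have hφpos : 0 < φ t := hpos t ⟨ht.1, le_trans ht.2.le hs.2⟩
        have hd1 : HasDerivAt (fun t => Real.sqrt (φ t))
            (1 / (2 * Real.sqrt (φ t)) * ρ t) t :=
          (Real.hasDerivAt_sqrt hφpos.ne').comp t (hφd t htI)
        have hd2 : HasDerivAt (fun t => (t - a) / (2 * β)) (1 / (2 * β)) t := by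
          simpa using ((hasDerivAt_id t).sub_const a).div_const (2 * β)
        exact (hd1.sub hd2).differentiableAt.differentiableWithinAt
      · intro t ht
        rw [interior_Icc] at ht
        have htI : t ∈ Icc 0 s₀ := hsub (Ioo_subset_Icc_self ht)
        have hφpos : 0 < φ t := hpos t ⟨ht.1, le_trans ht.2.le hs.2⟩
        have hd1 : HasDerivAt (fun t => Real.sqrt (φ t))
            (1 / (2 * Real.sqrt (φ t)) * ρ t) t :=
          (Real.hasDerivAt_sqrt hφpos.ne').comp t (hφd t htI)
        have hd2 : HasDerivAt (fun t => (t - a) / (2 * β)) (1 / (2 * β)) t := by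
          simpa using ((hasDerivAt_id t).sub_const a).div_const (2 * β)
        rw [(by have := hd1.sub hd2; exact this : HasDerivAt (fun t => Real.sqrt (φ t) - (t - a) / (2 * β)) _ t).deriv]
        have hsq : 0 < Real.sqrt (φ t) := Real.sqrt_pos.2 hφpos
        have hb := hLoj' t htI
        have hβρ : 0 < β * ρ t := lt_of_lt_of_le hsq hb
        have hρpos : 0 < ρ t := by nlinarith
        have key : 1 / (2 * β) ≤ 1 / (2 * Real.sqrt (φ t)) * ρ t := by
          rw [div_mul_eq_mul_div, one_mul, div_le_div_iff₀ (by positivity) (by positivity)]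
          nlinarith
        linarith
    have h1 := hmono2 ⟨le_rfl, hs.1.le⟩ ⟨hs.1.le, le_rfl⟩ hs.1.le
    have h2 : 0 ≤ Real.sqrt (φ a) := Real.sqrt_nonneg _
    simp only [sub_self, zero_div, sub_zero] at h1
    linarith
  by_cases hA : ∀ t ∈ Ioc 0 s₀, 0 < φ t
  · -- main case: gradient nonvanishing along the curve
    have hρ_lb : ∀ s ∈ Ioc 0 s₀, s / (2 * β ^ 2) ≤ ρ s := by
      intro s hs
      have h1 := hcomp 0 le_rfl hs₀ hA s (by simpa using hs)
      have h2 := hLoj' s (Ioc_subset_Icc_self hs)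
      rw [div_le_iff₀ (by positivity)] at h1 ⊢
      nlinarith [mul_le_mul_of_nonneg_left h2 (by positivity : (0:ℝ) ≤ 2 * β)]
    have hρpos : ∀ s ∈ Ioc 0 s₀, 0 < ρ s := by
      intro s hs
      have h1 := hρ_lb s hs
      have h2 : 0 < s / (2 * β ^ 2) := div_pos hs.1 (by positivity)
      linarith
    have hgne : ∀ s ∈ Ioc 0 s₀, g (x s) ≠ 0 := fun s hs =>
      norm_ne_zero_iff.1 (hρpos s hs).ne'
    -- the normalized gradient is C¹ on V
    set V : Set (EuclideanSpace ℝ (Fin n)) :=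
      ball (0 : EuclideanSpace ℝ (Fin n)) 1 ∩ g ⁻¹' ({0}ᶜ) with hVdef
    have hN : ContDiffOn ℝ 1 (fun y => ‖g y‖⁻¹ • g y) V := by
      intro y hy
      have hgy : ContDiffAt ℝ 1 g y := hg1.contDiffAt (isOpen_ball.mem_nhds hy.1)
      exact (((hgy.norm ℝ hy.2).inv
        (norm_ne_zero_iff.2 hy.2)).smul hgy).contDiffWithinAt
    have hmaps : MapsTo x (Ioc 0 s₀) V := fun t ht =>
      ⟨hmem t (Ioc_subset_Icc_self ht), hgne t ht⟩
    have hdiffOn : DifferentiableOn ℝ x (Ioc 0 s₀) := fun t ht =>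
      (hode t (Ioc_subset_Icc_self ht)).differentiableAt.differentiableWithinAt
    have hdW : ∀ t ∈ Ioc 0 s₀, derivWithin x (Ioc 0 s₀) t = v t := fun t ht =>
      (hode t (Ioc_subset_Icc_self ht)).hasDerivWithinAt.derivWithin
        (uniqueDiffOn_Ioc 0 s₀ t ht)
    have hxC1 : ContDiffOn ℝ 1 x (Ioc 0 s₀) := by
      rw [show (1 : WithTop ℕ∞) = 0 + 1 by norm_num,
        contDiffOn_succ_iff_derivWithin (uniqueDiffOn_Ioc 0 s₀)]
      refine ⟨hdiffOn, by simp, ?_⟩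
      rw [contDiffOn_zero]
      exact (hN.continuousOn.comp hdiffOn.continuousOn hmaps).congr hdW
    constructor
    · rw [show (2 : WithTop ℕ∞) = 1 + 1 by norm_num,
        contDiffOn_succ_iff_derivWithin (uniqueDiffOn_Ioc 0 s₀)]
      refine ⟨hdiffOn, by simp, ?_⟩
      exact (hN.comp hxC1 hmaps).congr hdW
    · intro s hs
      have hsI : s ∈ Icc 0 s₀ := Ioc_subset_Icc_self hs
      have hGne : g (x s) ≠ 0 := hgne s hs
      have hρp : 0 < ρ s := hρpos s hs
      have hx' : HasDerivAt x (v s) s := hode s hsI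
      have hγ0 : HasDerivAt (g ∘ x) (fderiv ℝ g (x s) (v s)) s :=
        (hgd (x s) (hmem s hsI)).comp_hasDerivAt s hx'
      have hγ : HasDerivAt (fun t => g (x t)) (fderiv ℝ g (x s) (v s)) s := hγ0
      set G' : EuclideanSpace ℝ (Fin n) := fderiv ℝ g (x s) (v s) with hG'def
      have hvs1 : ‖v s‖ = 1 := by
        rw [hvdef]
        simp only [norm_smul, norm_inv, norm_norm]
        have : ‖g (x s)‖ ≠ 0 := norm_ne_zero_iff.2 hGne
        field_simp
      have hG'le : ‖G'‖ ≤ K := by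
        calc ‖G'‖ ≤ ‖fderiv ℝ g (x s)‖ * ‖v s‖ := (fderiv ℝ g (x s)).le_opNorm _
          _ = ‖fderiv ℝ g (x s)‖ := by rw [hvs1, mul_one]
          _ ≤ K := hHess (x s) (hmem s hsI)
      -- derivative of ρ
      have hQ : ⟪g (x s), g (x s)⟫ ≠ 0 := by
        rw [real_inner_self_eq_norm_mul_norm]
        positivity
      have hq : HasDerivAt (fun t => ⟪g (x t), g (x t)⟫)
          (⟪g (x s), G'⟫ + ⟪G', g (x s)⟫) s := HasDerivAt.inner ℝ hγ hγ
      have hρeq : ρ = fun t => Real.sqrt ⟪g (x t), g (x t)⟫ := by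
        funext t
        rw [hρdef, real_inner_self_eq_norm_mul_norm, Real.sqrt_mul_self (norm_nonneg _)]
      have hsqQ : Real.sqrt ⟪g (x s), g (x s)⟫ = ρ s := by
        rw [real_inner_self_eq_norm_mul_norm, Real.sqrt_mul_self (norm_nonneg _)]
      set ρ' : ℝ := 1 / (2 * ρ s) * (⟪g (x s), G'⟫ + ⟪G', g (x s)⟫) with hρ'def
      have hρ'd : HasDerivAt ρ ρ' s := by
        rw [hρ'def, ← hsqQ, hρeq]
        exact (Real.hasDerivAt_sqrt hQ).comp s hq
      have hρ'abs : |ρ'| ≤ K := by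
        have h1 : ρ' = ⟪g (x s), G'⟫ / ρ s := by
          rw [hρ'def, real_inner_comm G' (g (x s))]
          field_simp
          ring
        rw [h1, abs_div, abs_of_nonneg hρp.le, div_le_iff₀ hρp]
        calc |⟪g (x s), G'⟫| ≤ ‖g (x s)‖ * ‖G'‖ := abs_real_inner_le_norm _ _
          _ ≤ ρ s * K := mul_le_mul_of_nonneg_left hG'le (norm_nonneg _)
          _ = K * ρ s := mul_comm _ _
      have hinv : HasDerivAt (fun t => (ρ t)⁻¹) (-ρ' / ρ s ^ 2) s := hρ'd.inv hρp.ne'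
      have hv' : HasDerivAt v ((ρ s)⁻¹ • G' + (-ρ' / ρ s ^ 2) • g (x s)) s := by
        rw [hvdef]
        exact hinv.smul hγ
      have heq : deriv x =ᶠ[nhdsWithin s (Iic s)] v := by
        filter_upwards [aux_mem_Iic hs.1] with t ht
        exact (hode t ⟨ht.1.le, le_trans ht.2 hs.2⟩).deriv
      have hval : deriv x s = v s := (hode s hsI).deriv
      refine le_trans (aux_deriv_le heq hval hv') ?_
      have hnb : ‖(ρ s)⁻¹ • G' + (-ρ' / ρ s ^ 2) • g (x s)‖ ≤ 2 * K / ρ s := by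
        calc ‖(ρ s)⁻¹ • G' + (-ρ' / ρ s ^ 2) • g (x s)‖
            ≤ ‖(ρ s)⁻¹ • G'‖ + ‖(-ρ' / ρ s ^ 2) • g (x s)‖ := norm_add_le _ _
          _ = (ρ s)⁻¹ * ‖G'‖ + |ρ'| / ρ s ^ 2 * ρ s := by
              rw [norm_smul, norm_smul, Real.norm_eq_abs, Real.norm_eq_abs,
                abs_of_nonneg (inv_nonneg.2 hρp.le), abs_div, abs_neg,
                abs_of_nonneg (sq_nonneg (ρ s))]
          _ ≤ (ρ s)⁻¹ * K + K / ρ s ^ 2 * ρ s := by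
              gcongr
          _ = 2 * K / ρ s := by
              field_simp
              ring
      refine le_trans hnb ?_
      rw [div_le_div_iff₀ hρp hs.1]
      have h5 := hρ_lb s hs
      rw [div_le_iff₀ (by positivity)] at h5
      have h6 := mul_le_mul_of_nonneg_left h5 (by positivity : (0:ℝ) ≤ 2 * K)
      linarith [h6]
  · -- degenerate case: φ vanishes somewhere in (0, s₀], hence everywhere
    push_neg at hA
    obtain ⟨σ, hσmem, hσle⟩ := hA
    have hφσ : φ σ = 0 := le_antisymm hσle (hφ0 σ (Ioc_subset_Icc_self hσmem))
    have hφcont : ContinuousOn φ (Icc 0 s₀) := fun t ht =>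
      (hφd t ht).continuousAt.continuousWithinAt
    have hzero : ∀ t ∈ Icc 0 s₀, φ t = 0 := by
      by_contra hcon
      push_neg at hcon
      obtain ⟨t₁, ht₁, ht₁ne⟩ := hcon
      set Z : Set ℝ := Icc 0 s₀ ∩ φ ⁻¹' {0} with hZdef
      have hZcl : IsClosed Z :=
        hφcont.preimage_isClosed_of_isClosed isClosed_Icc isClosed_singleton
      have hZcpt : IsCompact Z := isCompact_Icc.of_isClosed_subset hZcl inter_subset_left
      have hZne : Z.Nonempty := ⟨σ, Ioc_subset_Icc_self hσmem, hφσ⟩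
      set σ' : ℝ := sSup Z with hσ'def
      have hσ'Z : σ' ∈ Z := hZcpt.sSup_mem hZne
      have hσσ' : σ ≤ σ' := le_csSup hZcpt.bddAbove ⟨Ioc_subset_Icc_self hσmem, hφσ⟩
      have hσ'0 : 0 < σ' := lt_of_lt_of_le hσmem.1 hσσ'
      have hσ'le : σ' ≤ s₀ := hσ'Z.1.2
      have hφσ' : φ σ' = 0 := hσ'Z.2
      have hpos : ∀ t ∈ Ioc σ' s₀, 0 < φ t := by
        intro t ht
        have htI : t ∈ Icc 0 s₀ := ⟨le_trans hσ'0.le ht.1.le, ht.2⟩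
        rcases (hφ0 t htI).lt_or_eq with h | h
        · exact h
        · exact absurd (le_csSup hZcpt.bddAbove ⟨htI, h.symm⟩) (not_le.2 ht.1)
      have hσ's₀ : σ' < s₀ := by
        rcases hσ'le.lt_or_eq with h | h
        · exact h
        · exfalso
          have h1 : 0 < φ t₁ := (hφ0 t₁ ht₁).lt_of_ne (Ne.symm ht₁ne)
          have h2 : φ t₁ ≤ φ s₀ := hmono ht₁ ⟨hs₀.le, le_rfl⟩ ht₁.2
          rw [← h, hφσ'] at h2
          linarith
      -- the gradient vanishes at x σ'
      have hzeroleft : ∀ τ ∈ Icc 0 σ', φ τ = 0 := by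
        intro τ hτ
        have hτI : τ ∈ Icc 0 s₀ := ⟨hτ.1, le_trans hτ.2 hσ'le⟩
        refine le_antisymm ?_ (hφ0 τ hτI)
        rw [← hφσ']
        exact hmono hτI hσ'Z.1 hτ.2
      have hρσ' : ρ σ' = 0 := by
        have h1 : HasDerivWithinAt φ (ρ σ') (Iic σ') σ' :=
          (hφd σ' hσ'Z.1).hasDerivWithinAt
        have h2 : HasDerivWithinAt φ 0 (Iic σ') σ' := by
          refine (hasDerivWithinAt_const σ' (Iic σ') (0:ℝ)).congr_of_eventuallyEq ?_ hφσ'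
          filter_upwards [Icc_mem_nhdsLE hσ'0] with τ hτ
          exact hzeroleft τ hτ
        have hu : UniqueDiffWithinAt ℝ (Iic σ') σ' := uniqueDiffOn_Iic σ' σ' self_mem_Iic
        rw [← h1.derivWithin hu, h2.derivWithin hu]
      have hgσ' : g (x σ') = 0 := norm_eq_zero.1 hρσ'
      have hx'0 : HasDerivAt x 0 σ' := by
        have := hode σ' hσ'Z.1
        rwa [hgσ', smul_zero] at this
      -- little-o estimate near σ'
      have hlo : (fun t => x t - x σ') =o[nhds σ'] fun t => t - σ' := by
        have := hasDerivAt_iff_isLittleO.1 hx'0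
        simpa using this
      set ε : ℝ := 1 / (8 * β ^ 2 * K) with hεdef
      have hεpos : 0 < ε := by positivity
      have hev := hlo.def hεpos
      rw [Metric.eventually_nhds_iff] at hev
      obtain ⟨δ, hδ0, hδ⟩ := hev
      set t : ℝ := min (σ' + δ / 2) s₀ with htdef
      have hts : σ' < t := lt_min (by linarith) hσ's₀
      have hts₀ : t ≤ s₀ := min_le_right _ _
      have htδ : t - σ' ≤ δ / 2 := by
        have h1 := min_le_left (σ' + δ / 2) s₀
        rw [htdef]
        linarith
      have htI : t ∈ Icc 0 s₀ := ⟨le_trans hσ'0.le hts.le, hts₀⟩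
      -- derivative bound on [σ', t]
      have hbound : ∀ τ ∈ Ico σ' t, ‖ρ τ‖ ≤ K * (ε * (t - σ')) := by
        intro τ hτ
        have hτI : τ ∈ Icc 0 s₀ := ⟨le_trans hσ'0.le hτ.1, le_trans hτ.2.le hts₀⟩
        rw [Real.norm_eq_abs, abs_of_nonneg (norm_nonneg _)]
        have h1 : ρ τ = ‖g (x τ) - g (x σ')‖ := by rw [hρdef, hgσ', sub_zero]
        have hdist : dist τ σ' < δ := by
          rw [Real.dist_eq, abs_of_nonneg (by linarith [hτ.1] : (0:ℝ) ≤ τ - σ')]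
          linarith [hτ.2, htδ]
        have h3 : ‖x τ - x σ'‖ ≤ ε * ‖τ - σ'‖ := hδ hdist
        have h2 : ‖g (x τ) - g (x σ')‖ ≤ K * ‖x τ - x σ'‖ :=
          hLip (x τ) (hmem τ hτI) (x σ') (hmem σ' hσ'Z.1)
        have h4 : ‖τ - σ'‖ ≤ t - σ' := by
          rw [Real.norm_eq_abs, abs_of_nonneg (by linarith [hτ.1] : (0:ℝ) ≤ τ - σ')]
          linarith [hτ.2]
        calc ρ τ ≤ K * ‖x τ - x σ'‖ := by rw [h1]; exact h2
          _ ≤ K * (ε * ‖τ - σ'‖) := by gcongr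
          _ ≤ K * (ε * (t - σ')) := by gcongr
      have hMVT := norm_image_sub_le_of_norm_deriv_le_segment'
        (f := φ) (f' := ρ) (a := σ') (b := t)
        (fun τ hτ => (hφd τ ⟨le_trans hσ'0.le hτ.1, le_trans hτ.2 hts₀⟩).hasDerivWithinAt)
        hbound t (right_mem_Icc.2 hts.le)
      rw [hφσ', sub_zero, Real.norm_eq_abs, abs_of_nonneg (hφ0 t htI)] at hMVT
      -- lower bound from comparison
      have hlow := hcomp σ' hσ'0.le hσ's₀ hpos t ⟨hts, hts₀⟩
      rw [div_le_iff₀ (by positivity)] at hlow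
      have hKε : K * ε = 1 / (8 * β ^ 2) := by
        rw [hεdef]
        field_simp
      have hsq := Real.sq_sqrt (hφ0 t htI)
      have hsqnn := Real.sqrt_nonneg (φ t)
      have htpos : 0 < t - σ' := by linarith
      have h9 : (t - σ') * (t - σ') ≤ 4 * β ^ 2 * φ t := by nlinarith
      have h10 : φ t ≤ 1 / (8 * β ^ 2) * ((t - σ') * (t - σ')) := by
        calc φ t ≤ K * (ε * (t - σ')) * (t - σ') := hMVT
          _ = (K * ε) * ((t - σ') * (t - σ')) := by ring
          _ = 1 / (8 * β ^ 2) * ((t - σ') * (t - σ')) := by rw [hKε]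
      have hβ2 : 0 < β ^ 2 := by positivity
      have htt : 0 < (t - σ') * (t - σ') := mul_pos htpos htpos
      have h11 : 4 * β ^ 2 * (1 / (8 * β ^ 2) * ((t - σ') * (t - σ')))
          = ((t - σ') * (t - σ')) / 2 := by
        field_simp
        ring
      have h12 := mul_le_mul_of_nonneg_left h10 (by positivity : (0:ℝ) ≤ 4 * β ^ 2)
      rw [h11] at h12
      linarith
    -- now φ ≡ 0, hence the gradient vanishes along the curve and x is constant
    have hgzero : ∀ τ ∈ Icc 0 s₀, g (x τ) = 0 := by
      intro τ hτ
      rcases hτ.2.lt_or_eq with h | h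
      · have h1 : HasDerivWithinAt φ (ρ τ) (Ici τ) τ := (hφd τ hτ).hasDerivWithinAt
        have h2 : HasDerivWithinAt φ 0 (Ici τ) τ := by
          refine (hasDerivWithinAt_const τ (Ici τ) (0:ℝ)).congr_of_eventuallyEq ?_
            (hzero τ hτ)
          filter_upwards [Icc_mem_nhdsGE_of_mem (⟨le_rfl, h⟩ : τ ∈ Ico τ s₀)] with τ' hτ'
          exact hzero τ' ⟨le_trans hτ.1 hτ'.1, hτ'.2⟩
        have hu : UniqueDiffWithinAt ℝ (Ici τ) τ := uniqueDiffOn_Ici τ τ self_mem_Ici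
        have h3 : ρ τ = 0 := by rw [← h1.derivWithin hu, h2.derivWithin hu]
        exact norm_eq_zero.1 h3
      · subst h
        have h1 : HasDerivWithinAt φ (ρ τ) (Iic τ) τ := (hφd τ hτ).hasDerivWithinAt
        have h2 : HasDerivWithinAt φ 0 (Iic τ) τ := by
          refine (hasDerivWithinAt_const τ (Iic τ) (0:ℝ)).congr_of_eventuallyEq ?_
            (hzero τ hτ)
          filter_upwards [Icc_mem_nhdsLE hs₀] with τ' hτ'
          exact hzero τ' hτ'
        have hu : UniqueDiffWithinAt ℝ (Iic τ) τ := uniqueDiffOn_Iic τ τ self_mem_Iic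
        have h3 : ρ τ = 0 := by rw [← h1.derivWithin hu, h2.derivWithin hu]
        exact norm_eq_zero.1 h3
    have hvzero : ∀ τ ∈ Icc 0 s₀, v τ = 0 := fun τ hτ => by
      rw [hvdef]
      simp [hgzero τ hτ]
    have hxconst : ∀ τ ∈ Icc 0 s₀, x τ = x 0 := by
      intro τ hτ
      have h1 := norm_image_sub_le_of_norm_deriv_le_segment'
        (f := x) (f' := v) (a := 0) (b := s₀) (C := 0)
        (fun τ' hτ' => (hode τ' hτ').hasDerivWithinAt)
        (fun τ' hτ' => by rw [hvzero τ' (Ico_subset_Icc_self hτ')]; simp)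
        τ hτ
      rw [zero_mul] at h1
      have h2 : ‖x τ - x 0‖ = 0 := le_antisymm h1 (norm_nonneg _)
      rw [norm_eq_zero, sub_eq_zero] at h2
      exact h2
    constructor
    · exact contDiffOn_const.congr fun τ hτ => hxconst τ (Ioc_subset_Icc_self hτ)
    · intro s hs
      have hd0 : ∀ τ ∈ Icc 0 s₀, deriv x τ = 0 := by
        intro τ hτ
        have h1 := (hode τ hτ).deriv
        rw [hgzero τ hτ, smul_zero] at h1
        exact h1
      have heq : deriv x =ᶠ[nhdsWithin s (Iic s)]
          (fun _ => (0 : EuclideanSpace ℝ (Fin n))) := by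
        filter_upwards [aux_mem_Iic hs.1] with τ hτ
        exact hd0 τ ⟨hτ.1.le, le_trans hτ.2 hs.2⟩
      have hval : deriv x s = (fun _ => (0 : EuclideanSpace ℝ (Fin n))) s :=
        hd0 s (Ioc_subset_Icc_self hs)
      have hb := aux_deriv_le heq hval (hasDerivAt_const s (0 : EuclideanSpace ℝ (Fin n)))
      rw [norm_zero] at hb
      exact le_trans hb (div_nonneg (by positivity) hs.1.le)
end

section
/- Let u : ℝⁿ → ℝ be continuous on the closed unit ball, C¹ with Lipschitz gradient on the open ball, with u(0) = 0, satisfying |u|^{1/2} ≤ β|∇u| on B₁. Suppose 0 is a saddle point in the sense that there is a sequence pᵢ → 0 with u(pᵢ) > 0. Then there exist δ > 0 and a curve x ∈ C([0,δ]) ∩ C¹_loc((0,δ]) with x(0) = 0, x′(s) = ∇u(x(s))/|∇u(x(s))| for 0 < s ≤ δ, u(x(s)) > 0 for s ∈ (0,δ], and |x(s)| ≤ 2β·sqrt(u(x(s))) for all s ∈ [0,δ]. -/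
open Metric Set Filter
set_option linter.unusedSectionVars false
set_option maxHeartbeats 1000000
set_option synthInstance.maxHeartbeats 400000
noncomputable section
variable {E : Type*} [NormedAddCommGroup E] [InnerProductSpace ℝ E] [CompleteSpace E]

/-- The normalized gradient field. -/
def nvf (u : E → ℝ) (y : E) : E := ‖gradient u y‖⁻¹ • gradient u y

lemma norm_nvf_le_one (u : E → ℝ) (y : E) : ‖nvf u y‖ ≤ 1 := by
  unfold nvf
  rcases eq_or_ne (gradient u y) 0 with h | h
  · simp [h]
  · rw [norm_smul, norm_inv, norm_norm, inv_mul_cancel₀ (norm_ne_zero_iff.2 h)]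

lemma inner_nvf (u : E → ℝ) (y : E) :
    (inner ℝ (gradient u y) (nvf u y) : ℝ) = ‖gradient u y‖ := by
  unfold nvf
  rcases eq_or_ne (gradient u y) 0 with h | h
  · simp [h]
  · rw [real_inner_smul_right, real_inner_self_eq_norm_mul_norm]
    field_simp

lemma normalize_sub_le_aux {c : ℝ} (hc : 0 < c) {v w : E} (hv : c ≤ ‖v‖) (hw : c ≤ ‖w‖)
    (hvw : ‖w‖ ≤ ‖v‖) : ‖‖v‖⁻¹ • v - ‖w‖⁻¹ • w‖ ≤ 2 / c * ‖v - w‖ := by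
  have hv0 : (0:ℝ) < ‖v‖ := lt_of_lt_of_le hc hv
  have hw0 : (0:ℝ) < ‖w‖ := lt_of_lt_of_le hc hw
  have key : ‖v‖⁻¹ • v - ‖w‖⁻¹ • w = ‖v‖⁻¹ • (v - w) + (‖v‖⁻¹ - ‖w‖⁻¹) • w := by
    rw [smul_sub, sub_smul]; abel
  rw [key]
  have h1 : ‖‖v‖⁻¹ • (v - w)‖ ≤ c⁻¹ * ‖v - w‖ := by
    rw [norm_smul, norm_inv, norm_norm]
    gcongr
  have h2 : ‖(‖v‖⁻¹ - ‖w‖⁻¹) • w‖ ≤ c⁻¹ * ‖v - w‖ := by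
    rw [norm_smul, Real.norm_eq_abs, abs_of_nonpos (by
      simp only [sub_nonpos]
      exact inv_anti₀ hw0 hvw)]
    have : (-(‖v‖⁻¹ - ‖w‖⁻¹)) * ‖w‖ = (‖v‖ - ‖w‖) * (‖w‖ / (‖v‖ * ‖w‖)) := by
      field_simp; ring
    rw [this]
    have hnn : ‖v‖ - ‖w‖ ≤ ‖v - w‖ := by
      have := norm_sub_norm_le v w
      linarith
    have hfrac : ‖w‖ / (‖v‖ * ‖w‖) ≤ c⁻¹ := by
      rw [div_le_iff₀ (by positivity), inv_mul_eq_div, le_div_iff₀ hc]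
      nlinarith
    calc (‖v‖ - ‖w‖) * (‖w‖ / (‖v‖ * ‖w‖)) ≤ ‖v - w‖ * c⁻¹ := by
          apply mul_le_mul hnn hfrac (by positivity) (norm_nonneg _)
      _ = c⁻¹ * ‖v - w‖ := by ring
  calc ‖‖v‖⁻¹ • (v - w) + (‖v‖⁻¹ - ‖w‖⁻¹) • w‖
      ≤ ‖‖v‖⁻¹ • (v - w)‖ + ‖(‖v‖⁻¹ - ‖w‖⁻¹) • w‖ := norm_add_le _ _
    _ ≤ c⁻¹ * ‖v - w‖ + c⁻¹ * ‖v - w‖ := add_le_add h1 h2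
    _ = 2 / c * ‖v - w‖ := by field_simp; ring

lemma normalize_sub_le {c : ℝ} (hc : 0 < c) {v w : E} (hv : c ≤ ‖v‖) (hw : c ≤ ‖w‖) :
    ‖‖v‖⁻¹ • v - ‖w‖⁻¹ • w‖ ≤ 2 / c * ‖v - w‖ := by
  rcases le_total ‖w‖ ‖v‖ with h | h
  · exact normalize_sub_le_aux hc hv hw h
  · rw [norm_sub_rev, norm_sub_rev v w]
    exact normalize_sub_le_aux hc hw hv h

variable {u : E → ℝ} {β : ℝ}

/-- Continuity of the normalized gradient at points of positive value. -/
lemma nvf_continuousAt {L : NNReal} (hβ : 0 < β)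
    (hLip : LipschitzOnWith L (gradient u) (ball 0 1))
    (hLoj' : ∀ y ∈ ball (0:E) 1, Real.sqrt (u y) ≤ β * ‖gradient u y‖)
    {w : E} (hw : w ∈ ball (0:E) 1) (hww : 0 < u w) : ContinuousAt (nvf u) w := by
  have hg : ContinuousAt (gradient u) w :=
    hLip.continuousOn.continuousAt (isOpen_ball.mem_nhds hw)
  have hgne : gradient u w ≠ 0 := by
    intro h
    have := hLoj' w hw
    rw [h] at this
    simp only [norm_zero, mul_zero] at this
    exact absurd (Real.sqrt_pos.2 hww) (not_lt.2 this)
  have : ContinuousAt (fun y => ‖gradient u y‖⁻¹) w :=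
    (hg.norm.inv₀ (norm_ne_zero_iff.2 hgne))
  exact this.smul hg

/-- A priori estimates for solutions of the normalized gradient flow. -/
lemma apriori (hβ : 0 < β) (hC1 : DifferentiableOn ℝ u (ball 0 1))
    (hLoj' : ∀ y ∈ ball (0:E) 1, Real.sqrt (u y) ≤ β * ‖gradient u y‖)
    {y : ℝ → E} {z : E} {T : ℝ} (hT : T ≤ 1/4) (hz : ‖z‖ ≤ 1/4) (hz2 : 0 < u z)
    (hy0 : y 0 = z)
    (hy : ∀ t ∈ Icc 0 T, HasDerivWithinAt y (nvf u (y t)) (Icc 0 T) t) :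
    (∀ s ∈ Icc 0 T, ∀ t ∈ Icc 0 T, ‖y s - y t‖ ≤ |s - t|) ∧
    (∀ t ∈ Icc 0 T, u z ≤ u (y t)) ∧
    (∀ t ∈ Icc 0 T, Real.sqrt (u z) + t/(2*β) ≤ Real.sqrt (u (y t))) := by
  -- Lipschitz bound
  have hlip : ∀ s ∈ Icc 0 T, ∀ t ∈ Icc 0 T, ‖y s - y t‖ ≤ |s - t| := by
    intro s hs t ht
    have := Convex.norm_image_sub_le_of_norm_hasDerivWithin_le
      (f := y) (f' := fun t => nvf u (y t)) (C := 1)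
      (fun t ht => hy t ht) (fun t _ => norm_nvf_le_one u (y t)) (convex_Icc 0 T) ht hs
    simpa [Real.norm_eq_abs] using this
  refine ⟨hlip, ?_⟩
  have hmem : ∀ t ∈ Icc 0 T, y t ∈ ball (0:E) 1 := by
    intro t ht
    have h0 : (0:ℝ) ∈ Icc 0 T := ⟨le_refl _, ht.1.trans ht.2⟩
    have h1 := hlip t ht 0 h0
    rw [hy0] at h1
    have h3 : |t - 0| = t := by rw [sub_zero, abs_of_nonneg ht.1]
    rw [h3] at h1
    have h2 : ‖y t‖ - ‖z‖ ≤ ‖y t - z‖ := norm_sub_norm_le _ _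
    have : ‖y t‖ < 1 := by
      have ht4 : t ≤ 1/4 := ht.2.trans hT
      linarith
    simpa [mem_ball, dist_eq_norm] using this
  -- continuity of y and of u ∘ y
  have hycont : ContinuousOn y (Icc 0 T) := fun t ht => (hy t ht).continuousWithinAt
  have hψcont : ContinuousOn (fun s => u (y s)) (Icc 0 T) :=
    (hC1.continuousOn.comp hycont hmem)
  -- derivative of u ∘ y at interior points
  have hψd : ∀ t ∈ Ioo 0 T, HasDerivAt (fun s => u (y s)) ‖gradient u (y t)‖ t := by
    intro t ht
    have hyd : HasDerivAt y (nvf u (y t)) t :=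
      (hy t (Ioo_subset_Icc_self ht)).hasDerivAt (Icc_mem_nhds ht.1 ht.2)
    have hud : DifferentiableAt ℝ u (y t) :=
      hC1.differentiableAt (isOpen_ball.mem_nhds (hmem t (Ioo_subset_Icc_self ht)))
    have hgrad : HasFDerivAt u
        ((InnerProductSpace.toDualMap ℝ E (gradient u (y t))) : E →L[ℝ] ℝ) (y t) :=
      hasGradientAt_iff_hasFDerivAt.mp hud.hasGradientAt
    have := hgrad.comp_hasDerivAt t hyd
    simpa only [Function.comp_def, ContinuousLinearMap.coe_coe,
      InnerProductSpace.toDualMap_apply_apply, inner_nvf] using this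
  -- monotonicity of u ∘ y
  have hmono : MonotoneOn (fun s => u (y s)) (Icc 0 T) := by
    apply monotoneOn_of_deriv_nonneg (convex_Icc 0 T) hψcont
    · intro t ht
      rw [interior_Icc] at ht
      exact ((hψd t ht).differentiableAt).differentiableWithinAt
    · intro t ht
      rw [interior_Icc] at ht
      rw [(hψd t ht).deriv]
      exact norm_nonneg _
  have hge : ∀ t ∈ Icc 0 T, u z ≤ u (y t) := by
    intro t ht
    have h0 : (0:ℝ) ∈ Icc 0 T := ⟨le_refl _, ht.1.trans ht.2⟩
    have := hmono h0 ht ht.1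
    simpa [hy0] using this
  refine ⟨hge, ?_⟩
  -- the function η s = sqrt(u (y s)) - s/(2β) is monotone
  set η : ℝ → ℝ := fun s => Real.sqrt (u (y s)) - s/(2*β) with hη
  have hηd : ∀ t ∈ Ioo 0 T, HasDerivAt η
      (1 / (2 * Real.sqrt (u (y t))) * ‖gradient u (y t)‖ - 1/(2*β)) t := by
    intro t ht
    have hne : u (y t) ≠ 0 := ne_of_gt (lt_of_lt_of_le hz2 (hge t (Ioo_subset_Icc_self ht)))
    have h1 : HasDerivAt (fun s => Real.sqrt (u (y s)))
        (1 / (2 * Real.sqrt (u (y t))) * ‖gradient u (y t)‖) t :=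
      (Real.hasDerivAt_sqrt hne).comp t (hψd t ht)
    have h2 : HasDerivAt (fun s : ℝ => s/(2*β)) (1/(2*β)) t := by
      simpa using (hasDerivAt_id t).div_const (2*β)
    exact h1.sub h2
  have hηmono : MonotoneOn η (Icc 0 T) := by
    apply monotoneOn_of_deriv_nonneg (convex_Icc 0 T)
    · exact (hψcont.sqrt.sub (continuousOn_id.div_const _))
    · intro t ht
      rw [interior_Icc] at ht
      exact ((hηd t ht).differentiableAt).differentiableWithinAt
    · intro t ht
      rw [interior_Icc] at ht
      rw [(hηd t ht).deriv]
      have hpos : 0 < u (y t) := lt_of_lt_of_le hz2 (hge t (Ioo_subset_Icc_self ht))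
      have hs : 0 < Real.sqrt (u (y t)) := Real.sqrt_pos.2 hpos
      have hL := hLoj' (y t) (hmem t (Ioo_subset_Icc_self ht))
      rw [sub_nonneg, div_mul_eq_mul_div, one_mul, div_le_div_iff₀ (by positivity) (by positivity)]
      nlinarith [hs, hL, hβ]
  intro t ht
  have h0 : (0:ℝ) ∈ Icc 0 T := ⟨le_refl _, ht.1.trans ht.2⟩
  have := hηmono h0 ht ht.1
  simp only [hη, hy0, zero_div] at this
  linarith [this]

/-- One Picard–Lindelöf step for the normalized gradient flow. -/
lemma pl_step {L : NNReal} {M : ℝ}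
    (hβ : 0 < β) (hC1 : DifferentiableOn ℝ u (ball 0 1))
    (hLip : LipschitzOnWith L (gradient u) (ball 0 1))
    (hLoj' : ∀ y ∈ ball (0:E) 1, Real.sqrt (u y) ≤ β * ‖gradient u y‖)
    (hM : ∀ v ∈ ball (0:E) 1, ∀ w ∈ ball (0:E) 1, |u v - u w| ≤ M * ‖v - w‖)
    (hM1 : 1 ≤ M)
    {a : ℝ} (ha : 0 < a)
    {z : E} (hz : ‖z‖ ≤ 1/2) (hza : a ≤ u z) (t₀ : ℝ) :
    ∃ y : ℝ → E, y t₀ = z ∧ ∀ t ∈ Icc t₀ (t₀ + min (1/8) (a/(2*M))),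
      HasDerivWithinAt y (nvf u (y t)) (Icc t₀ (t₀ + min (1/8) (a/(2*M)))) t := by
  set r : ℝ := min (1/8) (a/(2*M)) with hrdef
  have hM0 : (0:ℝ) < M := lt_of_lt_of_le one_pos hM1
  have hr0 : 0 < r := lt_min (by norm_num) (by positivity)
  set c : ℝ := Real.sqrt (a/2) / β with hcdef
  have hc0 : 0 < c := div_pos (Real.sqrt_pos.2 (by linarith)) hβ
  have hsub : closedBall z r ⊆ ball (0:E) 1 := by
    intro w hw
    rw [mem_closedBall, dist_eq_norm] at hw
    have : ‖w‖ - ‖z‖ ≤ ‖w - z‖ := norm_sub_norm_le _ _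
    have hr8 : r ≤ 1/8 := min_le_left _ _
    rw [mem_ball, dist_eq_norm, sub_zero]
    linarith
  have hreg : ∀ w ∈ closedBall z r, c ≤ ‖gradient u w‖ ∧ gradient u w ≠ 0 := by
    intro w hw
    have hw1 : w ∈ ball (0:E) 1 := hsub hw
    have hz1 : z ∈ ball (0:E) 1 := hsub (mem_closedBall_self hr0.le)
    have huw : a/2 ≤ u w := by
      have h1 := hM w hw1 z hz1
      rw [mem_closedBall, dist_eq_norm] at hw
      have h2 : M * ‖w - z‖ ≤ M * r := by gcongr
      have h3 : M * r ≤ M * (a/(2*M)) := by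
        have : r ≤ a/(2*M) := min_le_right _ _
        gcongr
      have h4 : M * (a/(2*M)) = a/2 := by field_simp
      have h5 : |u w - u z| ≤ a/2 := by rw [← h4]; exact h1.trans (h2.trans h3)
      have := abs_le.1 h5
      linarith
    have h6 : Real.sqrt (a/2) ≤ Real.sqrt (u w) := Real.sqrt_le_sqrt huw
    have h7 := hLoj' w hw1
    have hle : c ≤ ‖gradient u w‖ := by
      rw [hcdef, div_le_iff₀ hβ]
      calc Real.sqrt (a/2) ≤ Real.sqrt (u w) := h6
        _ ≤ β * ‖gradient u w‖ := h7
        _ = ‖gradient u w‖ * β := mul_comm _ _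
    refine ⟨hle, ?_⟩
    intro h
    rw [h, norm_zero] at hle
    exact absurd hle (not_le.2 hc0)
  -- Lipschitz property of nvf on the closed ball
  have hlipV : LipschitzOnWith (Real.toNNReal (2/c*L)) (nvf u) (closedBall z r) := by
    rw [lipschitzOnWith_iff_dist_le_mul]
    intro v hv w hw
    rw [dist_eq_norm]
    have h1 : ‖nvf u v - nvf u w‖ ≤ 2/c * ‖gradient u v - gradient u w‖ :=
      normalize_sub_le hc0 (hreg v hv).1 (hreg w hw).1
    have h2 : dist (gradient u v) (gradient u w) ≤ L * dist v w := by
      have := lipschitzOnWith_iff_dist_le_mul.1 hLip v (hsub hv) w (hsub hw)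
      exact this
    rw [dist_eq_norm, dist_eq_norm] at h2
    have hcoe : ((Real.toNNReal (2/c*L) : NNReal) : ℝ) = 2/c * L := by
      rw [Real.coe_toNNReal]
      positivity
    rw [hcoe, dist_eq_norm]
    calc ‖nvf u v - nvf u w‖ ≤ 2/c * ‖gradient u v - gradient u w‖ := h1
      _ ≤ 2/c * (L * ‖v - w‖) := by gcongr
      _ = 2/c * L * ‖v - w‖ := by ring
  have hrr : ((Real.toNNReal r : NNReal) : ℝ) = r := Real.coe_toNNReal _ hr0.le
  have hpl : IsPicardLindelof (fun _ x => nvf u x) (tmin := t₀) (tmax := t₀ + r)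
      ⟨t₀, le_refl _, by linarith⟩ z (Real.toNNReal r) 0 1 (Real.toNNReal (2/c*L)) := by
    constructor
    · intro t _; rw [hrr]; exact hlipV
    · intro x _; exact continuousOn_const
    · intro t _ x _; exact norm_nvf_le_one u x
    · simp only [hrr, NNReal.coe_one, NNReal.coe_zero, one_mul, sub_zero]
      rw [add_sub_cancel_left, sub_self, max_eq_left hr0.le]
  obtain ⟨y, hy0, hy⟩ := hpl.exists_eq_forall_mem_Icc_hasDerivWithinAt₀
  exact ⟨y, hy0, hy⟩

/-- Gluing two solutions of an autonomous ODE on adjacent intervals. -/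
lemma glue_ode {V : E → E} {f g : ℝ → E} {t0 t1 t2 : ℝ} (h01 : t0 ≤ t1) (h12 : t1 ≤ t2)
    (hf : ∀ t ∈ Icc t0 t1, HasDerivWithinAt f (V (f t)) (Icc t0 t1) t)
    (hg : ∀ t ∈ Icc t1 t2, HasDerivWithinAt g (V (g t)) (Icc t1 t2) t)
    (hfg : f t1 = g t1) :
    ∃ F : ℝ → E, F t0 = f t0 ∧
      ∀ t ∈ Icc t0 t2, HasDerivWithinAt F (V (F t)) (Icc t0 t2) t := by
  classical
  set F : ℝ → E := fun t => if t ≤ t1 then f t else g t with hF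
  have hFf : ∀ s ∈ Icc t0 t1, F s = f s := fun s hs => if_pos hs.2
  have hFg : ∀ s ∈ Icc t1 t2, F s = g s := by
    intro s hs
    by_cases h : s ≤ t1
    · have : s = t1 := le_antisymm h hs.1
      simp [hF, this, hfg]
    · simp [hF, h]
  refine ⟨F, if_pos h01, ?_⟩
  intro t ht
  rcases lt_trichotomy t t1 with hlt | heq | hgt
  · -- t < t1
    have ht1 : t ∈ Icc t0 t1 := ⟨ht.1, hlt.le⟩
    have hset : Icc t0 t1 =ᶠ[nhds t] Icc t0 t2 := by
      have hmem : Iio t1 ∈ nhds t := isOpen_Iio.mem_nhds hlt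
      filter_upwards [hmem] with s hs
      simp only [mem_Icc, eq_iff_iff]
      constructor
      · rintro ⟨h1, h2⟩; exact ⟨h1, h2.trans h12⟩
      · rintro ⟨h1, _⟩; exact ⟨h1, (le_of_lt hs)⟩
    have h1 : HasDerivWithinAt f (V (f t)) (Icc t0 t2) t :=
      (hasDerivWithinAt_congr_set hset).mp (hf t ht1)
    have hev : F =ᶠ[nhdsWithin t (Icc t0 t2)] f := by
      filter_upwards [mem_nhdsWithin_of_mem_nhds (isOpen_Iio.mem_nhds hlt)] with s hs
      exact if_pos (le_of_lt hs)
    have h2 := h1.congr_of_eventuallyEq hev (if_pos hlt.le)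
    rwa [show F t = f t from if_pos hlt.le]
  · -- t = t1
    subst heq
    have hA := (hf t ⟨ht.1, le_refl _⟩).congr hFf (hFf t ⟨ht.1, le_refl _⟩)
    have hB := (hg t ⟨le_refl _, ht.2⟩).congr hFg (hFg t ⟨le_refl _, ht.2⟩)
    have hFt : F t = f t := if_pos (le_refl _)
    rw [← hFt] at hA
    have hgt' : V (g t) = V (F t) := by rw [← hfg, ← hFt]
    rw [hgt'] at hB
    have := hA.union hB
    rwa [Icc_union_Icc_eq_Icc ht.1 ht.2] at this
  · -- t > t1
    have ht2 : t ∈ Icc t1 t2 := ⟨hgt.le, ht.2⟩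
    have hset : Icc t1 t2 =ᶠ[nhds t] Icc t0 t2 := by
      have hmem : Ioi t1 ∈ nhds t := isOpen_Ioi.mem_nhds hgt
      filter_upwards [hmem] with s hs
      simp only [mem_Icc, eq_iff_iff]
      constructor
      · rintro ⟨_, h2⟩; exact ⟨h01.trans (le_of_lt hs), h2⟩
      · rintro ⟨_, h2⟩; exact ⟨le_of_lt hs, h2⟩
    have h1 : HasDerivWithinAt g (V (g t)) (Icc t0 t2) t :=
      (hasDerivWithinAt_congr_set hset).mp (hg t ht2)
    have hev : F =ᶠ[nhdsWithin t (Icc t0 t2)] g := by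
      filter_upwards [mem_nhdsWithin_of_mem_nhds (isOpen_Ioi.mem_nhds hgt)] with s hs
      exact if_neg (not_le.2 hs)
    have h2 := h1.congr_of_eventuallyEq hev (if_neg (not_le.2 hgt))
    rwa [show F t = g t from if_neg (not_le.2 hgt)]

/-- Global existence of the normalized gradient flow on `[0, T]`. -/
lemma exists_sol {L : NNReal} {M : ℝ}
    (hβ : 0 < β) (hC1 : DifferentiableOn ℝ u (ball 0 1))
    (hLip : LipschitzOnWith L (gradient u) (ball 0 1))
    (hLoj' : ∀ y ∈ ball (0:E) 1, Real.sqrt (u y) ≤ β * ‖gradient u y‖)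
    (hM : ∀ v ∈ ball (0:E) 1, ∀ w ∈ ball (0:E) 1, |u v - u w| ≤ M * ‖v - w‖)
    (hM1 : 1 ≤ M)
    {a : ℝ} (ha : 0 < a)
    {z : E} (hz : ‖z‖ ≤ 1/4) (hza : a ≤ u z) {T : ℝ} (hT0 : 0 ≤ T) (hT : T ≤ 1/4) :
    ∃ y : ℝ → E, y 0 = z ∧ ∀ t ∈ Icc 0 T, HasDerivWithinAt y (nvf u (y t)) (Icc 0 T) t := by
  set r : ℝ := min (1/8) (a/(2*M)) with hrdef
  have hM0 : (0:ℝ) < M := lt_of_lt_of_le one_pos hM1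
  have hr0 : 0 < r := lt_min (by norm_num) (by positivity)
  have claim : ∀ k : ℕ, ∃ y : ℝ → E, y 0 = z ∧
      ∀ t ∈ Icc 0 (min (((k:ℝ)+1)*r) T),
        HasDerivWithinAt y (nvf u (y t)) (Icc 0 (min (((k:ℝ)+1)*r) T)) t := by
    intro k
    induction k with
    | zero =>
      obtain ⟨y, hy0, hy⟩ := pl_step hβ hC1 hLip hLoj' hM hM1 ha
        (by linarith : ‖z‖ ≤ 1/2) hza 0
      rw [zero_add] at hy
      refine ⟨y, hy0, ?_⟩
      have hss : Icc 0 (min ((((0:ℕ):ℝ)+1)*r) T) ⊆ Icc (0:ℝ) r := by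
        apply Icc_subset_Icc (le_refl _)
        calc min ((((0:ℕ):ℝ)+1)*r) T ≤ (((0:ℕ):ℝ)+1)*r := min_le_left _ _
          _ = r := by norm_num
      exact fun t ht => (hy t (hss ht)).mono hss
    | succ k ih =>
      obtain ⟨y, hy0, hy⟩ := ih
      simp only [Nat.cast_add, Nat.cast_one]
      set ek : ℝ := min (((k:ℝ)+1)*r) T with hek
      set ek1 : ℝ := min (((k:ℝ)+1+1)*r) T with hek1
      have he0 : 0 ≤ ek := le_min (by positivity) hT0
      by_cases hc : T ≤ ((k:ℝ)+1)*r
      · have h1 : ek = T := min_eq_right hc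
        have h2 : ek1 = T := min_eq_right (by nlinarith)
        rw [h2, ← h1]
        exact ⟨y, hy0, hy⟩
      · push_neg at hc
        have h1 : ek = ((k:ℝ)+1)*r := min_eq_left hc.le
        have hekT : ek ≤ T := min_le_right _ _
        have hek4 : ek ≤ 1/4 := hekT.trans hT
        have hz2 : 0 < u z := lt_of_lt_of_le ha hza
        obtain ⟨hlip, hge, _⟩ := apriori hβ hC1 hLoj' hek4 hz hz2 hy0 hy
        have hmem : ek ∈ Icc 0 ek := ⟨he0, le_refl _⟩
        have h0mem : (0:ℝ) ∈ Icc 0 ek := ⟨le_refl _, he0⟩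
        have hnorm : ‖y ek‖ ≤ 1/2 := by
          have := hlip ek hmem 0 h0mem
          rw [hy0, sub_zero, abs_of_nonneg he0] at this
          have h3 : ‖y ek‖ - ‖z‖ ≤ ‖y ek - z‖ := norm_sub_norm_le _ _
          linarith
        have hu : a ≤ u (y ek) := hza.trans (hge ek hmem)
        obtain ⟨g, hg0, hg⟩ := pl_step hβ hC1 hLip hLoj' hM hM1 ha hnorm hu ek
        have hle : ek ≤ ek1 := by
          apply le_min _ hekT
          rw [h1]
          nlinarith
        have hup : ek1 ≤ ek + r := by
          rw [h1]
          calc ek1 ≤ ((k:ℝ)+1+1)*r := min_le_left _ _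
            _ = ((k:ℝ)+1)*r + r := by ring
        have hss : Icc ek ek1 ⊆ Icc ek (ek + r) := Icc_subset_Icc (le_refl _) hup
        have hg' : ∀ t ∈ Icc ek ek1, HasDerivWithinAt g (nvf u (g t)) (Icc ek ek1) t :=
          fun t ht => (hg t (hss ht)).mono hss
        obtain ⟨F, hF0, hF⟩ := glue_ode he0 hle hy hg' hg0.symm
        exact ⟨F, hF0.trans hy0, hF⟩
  obtain ⟨k, hk⟩ := exists_nat_ge (T/r)
  have hkr : T ≤ ((k:ℝ)+1)*r := by
    have : T = (T/r)*r := by field_simp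
    rw [this]
    have h1 : (T/r)*r ≤ (k:ℝ)*r := by gcongr
    nlinarith
  obtain ⟨y, hy0, hy⟩ := claim k
  rw [min_eq_right hkr] at hy
  exact ⟨y, hy0, hy⟩

/-- The curve through a point `q` near the origin, extended by constancy to `[0, 1/4]`. -/
lemma curve_exists {L : NNReal} {M : ℝ}
    (hβ : 0 < β) (hC1 : DifferentiableOn ℝ u (ball 0 1))
    (hLip : LipschitzOnWith L (gradient u) (ball 0 1))
    (hLoj' : ∀ y ∈ ball (0:E) 1, Real.sqrt (u y) ≤ β * ‖gradient u y‖)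
    (hM : ∀ v ∈ ball (0:E) 1, ∀ w ∈ ball (0:E) 1, |u v - u w| ≤ M * ‖v - w‖)
    (hM1 : 1 ≤ M)
    {q : E} (hq : ‖q‖ ≤ 1/8) (hq1 : 0 < u q) (hqb : 2*β*Real.sqrt (u q) ≤ 1/8) :
    ∃ x : ℝ → E,
      x 0 = q ∧
      (∀ s ∈ Icc (0:ℝ) (1/4), ∀ t ∈ Icc (0:ℝ) (1/4), ‖x s - x t‖ ≤ |s - t|) ∧
      (∀ s ∈ Icc (0:ℝ) (1/4), ‖x s - q‖ ≤ s) ∧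
      (∀ s ∈ Icc (0:ℝ) (1/4), s/(2*β) ≤ Real.sqrt (u (x s))) ∧
      (∀ s ∈ Icc (2*β*Real.sqrt (u q)) (1/4),
        HasDerivWithinAt x (nvf u (x s)) (Icc (2*β*Real.sqrt (u q)) (1/4)) s) := by
  classical
  set b : ℝ := 2*β*Real.sqrt (u q) with hbdef
  have hb0 : 0 < b := by
    have := Real.sqrt_pos.2 hq1
    positivity
  have hsq_eq : Real.sqrt (u q) = b/(2*β) := by
    rw [hbdef]; field_simp
  set T : ℝ := 1/4 - b with hTdef
  have hT0 : 0 ≤ T := by rw [hTdef]; linarith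
  have hT : T ≤ 1/4 := by rw [hTdef]; linarith
  obtain ⟨y, hy0, hy⟩ := exists_sol hβ hC1 hLip hLoj' hM hM1 hq1
    (by linarith : ‖q‖ ≤ 1/4) (le_refl _) hT0 hT
  obtain ⟨hlip, hge, hsq⟩ := apriori hβ hC1 hLoj' hT (by linarith) hq1 hy0 hy
  set x : ℝ → E := fun s => if s ≤ b then q else y (s - b) with hx
  have hx0 : x 0 = q := if_pos hb0.le
  have hagree : ∀ s ∈ Icc b (1/4), x s = y (s - b) := by
    intro s hs
    by_cases h : s ≤ b
    · have hsb : s = b := le_antisymm h hs.1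
      simp [hx, hsb, hy0]
    · simp [hx, h]
  have hmapsto : ∀ s ∈ Icc b (1/4), s - b ∈ Icc 0 T := by
    intro s hs
    exact ⟨by linarith [hs.1], by rw [hTdef]; linarith [hs.2]⟩
  have key : ∀ s ∈ Icc (0:ℝ) (1/4), ∀ t ∈ Icc (0:ℝ) (1/4), s ≤ t → ‖x s - x t‖ ≤ t - s := by
    intro s hs t ht hst
    by_cases h1 : t ≤ b
    · have h2 : s ≤ b := hst.trans h1
      simp only [hx, if_pos h1, if_pos h2, sub_self, norm_zero]
      linarith
    · push_neg at h1
      have hxt : x t = y (t - b) := hagree t ⟨h1.le, ht.2⟩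
      have htT : t - b ∈ Icc 0 T := hmapsto t ⟨h1.le, ht.2⟩
      by_cases h2 : s ≤ b
      · have hxs : x s = q := if_pos h2
        have h0T : (0:ℝ) ∈ Icc 0 T := ⟨le_refl _, hT0⟩
        have := hlip 0 h0T (t-b) htT
        rw [hy0] at this
        rw [hxs, hxt]
        have habs : |0 - (t-b)| = t - b := by
          rw [zero_sub, abs_neg, abs_of_nonneg (by linarith)]
        rw [habs] at this
        calc ‖q - y (t-b)‖ ≤ t - b := this
          _ ≤ t - s := by linarith
      · push_neg at h2
        have hxs : x s = y (s - b) := hagree s ⟨h2.le, hs.2⟩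
        have hsT : s - b ∈ Icc 0 T := hmapsto s ⟨h2.le, hs.2⟩
        have := hlip (s-b) hsT (t-b) htT
        rw [hxs, hxt]
        have habs : |s - b - (t-b)| = t - s := by
          rw [show s - b - (t-b) = s - t by ring, abs_of_nonpos (by linarith), neg_sub]
        rw [habs] at this
        linarith [this]
  have c1 : ∀ s ∈ Icc (0:ℝ) (1/4), ∀ t ∈ Icc (0:ℝ) (1/4), ‖x s - x t‖ ≤ |s - t| := by
    intro s hs t ht
    rcases le_total s t with h | h
    · rw [abs_of_nonpos (by linarith), neg_sub]; exact key s hs t ht h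
    · rw [abs_of_nonneg (by linarith), norm_sub_rev]; exact key t ht s hs h
  have c3' : ∀ s ∈ Icc (0:ℝ) (1/4), ‖x s - q‖ ≤ s := by
    intro s hs
    have h0 : (0:ℝ) ∈ Icc (0:ℝ) (1/4) := ⟨le_refl _, by norm_num⟩
    have := key 0 h0 s hs hs.1
    rw [hx0, norm_sub_rev] at this
    linarith
  have c3 : ∀ s ∈ Icc (0:ℝ) (1/4), s/(2*β) ≤ Real.sqrt (u (x s)) := by
    intro s hs
    by_cases h : s ≤ b
    · have hxs : x s = q := if_pos h
      rw [hxs, hsq_eq]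
      gcongr
    · push_neg at h
      have hxs : x s = y (s - b) := hagree s ⟨h.le, hs.2⟩
      have := hsq (s-b) (hmapsto s ⟨h.le, hs.2⟩)
      rw [hxs]
      rw [hsq_eq] at this
      have heq : b/(2*β) + (s-b)/(2*β) = s/(2*β) := by field_simp; ring
      linarith [this, heq]
  refine ⟨x, hx0, c1, c3', c3, ?_⟩
  intro s hs
  have houter := hy (s-b) (hmapsto s hs)
  have hinner : HasDerivWithinAt (fun s : ℝ => s - b) 1 (Icc b (1/4)) s :=
    (hasDerivWithinAt_id s _).sub_const b
  have maps : MapsTo (fun s : ℝ => s - b) (Icc b (1/4)) (Icc 0 T) := fun t ht => hmapsto t ht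
  have comp := houter.scomp s hinner maps
  rw [one_smul] at comp
  have := comp.congr hagree (hagree s hs)
  rwa [← hagree s hs] at this

end

open Metric Set Filter

/-- Proposition 3.6, saddle point: under the Łojasiewicz inequality, a
saddle point `0` admits an integral curve of the normalized gradient starting at `0`
along which `u > 0` and `|x(s)| ≤ 2β√(u(x(s)))`. -/
theorem stmt_5 (n : ℕ) (u : EuclideanSpace ℝ (Fin n) → ℝ) (β K : ℝ) (L : NNReal)
    (hβ : 0 < β)
    (hcont : ContinuousOn u (closedBall 0 1))
    (hC1 : DifferentiableOn ℝ u (ball 0 1))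
    (hLip : LipschitzOnWith L (gradient u) (ball 0 1))
    (hHess : ∀ z ∈ ball (0 : EuclideanSpace ℝ (Fin n)) 1,
      DifferentiableAt ℝ (gradient u) z ∧ ‖fderiv ℝ (gradient u) z‖ ≤ K)
    (hu0 : u 0 = 0)
    (hLoj : ∀ y ∈ ball (0 : EuclideanSpace ℝ (Fin n)) 1,
      |u y| ^ ((1 : ℝ) / 2) ≤ β * ‖gradient u y‖)
    (p : ℕ → EuclideanSpace ℝ (Fin n))
    (hp : Filter.Tendsto p Filter.atTop (nhds 0))
    (hpmem : ∀ i, p i ∈ ball (0 : EuclideanSpace ℝ (Fin n)) 1)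
    (hppos : ∀ i, 0 < u (p i)) :
    ∃ δ > (0 : ℝ), ∃ x : ℝ → EuclideanSpace ℝ (Fin n),
      ContinuousOn x (Icc 0 δ) ∧
      ContinuousOn (deriv x) (Ioc 0 δ) ∧
      x 0 = 0 ∧
      (∀ s ∈ Ioc 0 δ,
        HasDerivAt x (‖gradient u (x s)‖⁻¹ • gradient u (x s)) s ∧ 0 < u (x s)) ∧
      (∀ s ∈ Icc 0 δ, x s ∈ closedBall (0 : EuclideanSpace ℝ (Fin n)) 1 ∧
        ‖x s‖ ≤ 2 * β * Real.sqrt (u (x s))) := by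
  classical
  -- Łojasiewicz with sqrt
  have hLoj' : ∀ y ∈ ball (0 : EuclideanSpace ℝ (Fin n)) 1,
      Real.sqrt (u y) ≤ β * ‖gradient u y‖ := by
    intro y hy
    rcases le_or_gt 0 (u y) with h | h
    · have := hLoj y hy
      rwa [abs_of_nonneg h, ← Real.sqrt_eq_rpow] at this
    · have h0 : Real.sqrt (u y) = 0 := Real.sqrt_eq_zero'.2 h.le
      rw [h0]
      positivity
  -- Lipschitz constant for u
  set M : ℝ := max 1 (‖gradient u 0‖ + L) with hMdef
  have hM1 : (1:ℝ) ≤ M := le_max_left _ _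
  have hM : ∀ v ∈ ball (0 : EuclideanSpace ℝ (Fin n)) 1,
      ∀ w ∈ ball (0 : EuclideanSpace ℝ (Fin n)) 1, |u v - u w| ≤ M * ‖v - w‖ := by
    intro v hv w hw
    have hfd : ∀ z ∈ ball (0 : EuclideanSpace ℝ (Fin n)) 1, HasFDerivWithinAt u
        ((InnerProductSpace.toDualMap ℝ (EuclideanSpace ℝ (Fin n)) (gradient u z)) :
          EuclideanSpace ℝ (Fin n) →L[ℝ] ℝ) (ball 0 1) z := by
      intro z hz
      exact (hasGradientAt_iff_hasFDerivAt.mp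
        ((hC1.differentiableAt (isOpen_ball.mem_nhds hz)).hasGradientAt)).hasFDerivWithinAt
    have hbd : ∀ z ∈ ball (0 : EuclideanSpace ℝ (Fin n)) 1,
        ‖((InnerProductSpace.toDualMap ℝ (EuclideanSpace ℝ (Fin n)) (gradient u z)) :
          EuclideanSpace ℝ (Fin n) →L[ℝ] ℝ)‖ ≤ M := by
      intro z hz
      have h1 : ‖((InnerProductSpace.toDualMap ℝ (EuclideanSpace ℝ (Fin n)) (gradient u z)) :
          EuclideanSpace ℝ (Fin n) →L[ℝ] ℝ)‖ = ‖gradient u z‖ := by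
        exact (InnerProductSpace.toDualMap ℝ (EuclideanSpace ℝ (Fin n))).norm_map _
      rw [h1]
      have h2 : dist (gradient u z) (gradient u 0) ≤ L * dist z 0 :=
        lipschitzOnWith_iff_dist_le_mul.1 hLip z hz 0 (mem_ball_self one_pos)
      rw [dist_eq_norm, dist_eq_norm, sub_zero] at h2
      have h3 : ‖z‖ < 1 := by rwa [mem_ball, dist_eq_norm, sub_zero] at hz
      have h4 : ‖gradient u z‖ - ‖gradient u 0‖ ≤ ‖gradient u z - gradient u 0‖ :=
        norm_sub_norm_le _ _
      have h5 : (L:ℝ) * ‖z‖ ≤ L := by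
        nlinarith [h3, NNReal.coe_nonneg L, norm_nonneg z]
      have h6 : ‖gradient u 0‖ + L ≤ M := le_max_right _ _
      linarith
    have := Convex.norm_image_sub_le_of_norm_hasFDerivWithin_le hfd hbd (convex_ball 0 1) hw hv
    simpa [Real.norm_eq_abs] using this
  -- the sequence of starting points
  have hup : Tendsto (fun i => u (p i)) atTop (nhds 0) := by
    have hc : ContinuousAt u 0 := hcont.continuousAt (closedBall_mem_nhds 0 one_pos)
    have := hc.tendsto.comp hp
    rwa [hu0] at this
  have hbp : Tendsto (fun i => 2*β*Real.sqrt (u (p i))) atTop (nhds 0) := by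
    have h1 : Tendsto (fun i => Real.sqrt (u (p i))) atTop (nhds 0) := by
      have := (Real.continuous_sqrt.tendsto 0).comp hup
      rwa [Real.sqrt_zero] at this
    have := h1.const_mul (2*β)
    rwa [mul_zero] at this
  have hnp : Tendsto (fun i => ‖p i‖) atTop (nhds 0) := by
    have := (continuous_norm.tendsto (0 : EuclideanSpace ℝ (Fin n))).comp hp
    rwa [norm_zero] at this
  have hkey : ∀ m : ℕ, ∃ j : ℕ, ‖p j‖ ≤ min (1/8) (1/((m:ℝ)+1)) ∧
      2*β*Real.sqrt (u (p j)) ≤ min (1/8) (1/((m:ℝ)+1)) := by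
    intro m
    have hε : (0:ℝ) < min (1/8) (1/((m:ℝ)+1)) := lt_min (by norm_num) (by positivity)
    have h1 := hnp.eventually_lt_const hε
    have h2 := hbp.eventually_lt_const hε
    obtain ⟨j, hj1, hj2⟩ := (h1.and h2).exists
    exact ⟨j, hj1.le, hj2.le⟩
  choose j hj1 hj2 using hkey
  set q : ℕ → EuclideanSpace ℝ (Fin n) := fun m => p (j m) with hqdef
  have hq8 : ∀ m, ‖q m‖ ≤ 1/8 := fun m => (hj1 m).trans (min_le_left _ _)
  have hqm : ∀ m, ‖q m‖ ≤ 1/((m:ℝ)+1) := fun m => (hj1 m).trans (min_le_right _ _)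
  have hqb8 : ∀ m, 2*β*Real.sqrt (u (q m)) ≤ 1/8 := fun m => (hj2 m).trans (min_le_left _ _)
  have hqbm : ∀ m, 2*β*Real.sqrt (u (q m)) ≤ 1/((m:ℝ)+1) :=
    fun m => (hj2 m).trans (min_le_right _ _)
  have hqpos : ∀ m, 0 < u (q m) := fun m => hppos (j m)
  -- the approximating curves
  have hcurv := fun m => curve_exists hβ hC1 hLip hLoj' hM hM1 (hq8 m) (hqpos m) (hqb8 m)
  choose X hX0 hXlip hXdist hXsqrt hXode using hcurv
  have hXcont : ∀ m, ContinuousOn (X m) (Icc (0:ℝ) (1/4)) := by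
    intro m
    have : LipschitzOnWith 1 (X m) (Icc (0:ℝ) (1/4)) := by
      rw [lipschitzOnWith_iff_dist_le_mul]
      intro a ha b hb
      rw [dist_eq_norm, dist_eq_norm]
      simpa using hXlip m a ha b hb
    exact this.continuousOn
  have hXnorm : ∀ m, ∀ s ∈ Icc (0:ℝ) (1/4), ‖X m s‖ ≤ 3/8 := by
    intro m s hs
    have h1 := hXdist m s hs
    have h2 : ‖X m s‖ - ‖q m‖ ≤ ‖X m s - q m‖ := norm_sub_norm_le _ _
    have := hq8 m
    have := hs.2
    linarith
  -- Arzelà–Ascoli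
  haveI : CompactSpace (Icc (0:ℝ) (1/4)) := isCompact_iff_compactSpace.mp isCompact_Icc
  have hlipF : ∀ m, LipschitzWith 1 (fun s : Icc (0:ℝ) (1/4) => X m s) := by
    intro m
    apply LipschitzWith.of_dist_le_mul
    intro a b
    have h := hXlip m a a.2 b b.2
    rw [dist_eq_norm, Subtype.dist_eq, dist_eq_norm]
    simpa [Real.norm_eq_abs] using h
  set F : ℕ → BoundedContinuousFunction (Icc (0:ℝ) (1/4)) (EuclideanSpace ℝ (Fin n)) :=
    fun m => BoundedContinuousFunction.mkOfCompact ⟨_, (hlipF m).continuous⟩ with hFdef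
  set A : Set (BoundedContinuousFunction (Icc (0:ℝ) (1/4)) (EuclideanSpace ℝ (Fin n))) :=
    {f | LipschitzWith 1 f ∧ ∀ s, f s ∈ closedBall (0 : EuclideanSpace ℝ (Fin n)) (1/2)}
    with hAdef
  have hFA : ∀ m, F m ∈ A := by
    intro m
    constructor
    · exact hlipF m
    · intro s
      rw [mem_closedBall, dist_eq_norm, sub_zero]
      have := hXnorm m s s.2
      calc ‖(F m) s‖ = ‖X m s‖ := rfl
        _ ≤ 3/8 := this
        _ ≤ 1/2 := by norm_num
  have hequi : Equicontinuous ((↑) : A →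
      (Icc (0:ℝ) (1/4)) → (EuclideanSpace ℝ (Fin n))) := by
    apply Metric.equicontinuous_of_continuity_modulus (fun t => t)
    · exact tendsto_id
    · intro a b f
      have := f.2.1.dist_le_mul a b
      simpa using this
  have hcpt := BoundedContinuousFunction.arzela_ascoli
    (closedBall (0 : EuclideanSpace ℝ (Fin n)) (1/2)) (isCompact_closedBall _ _) A
    (fun f s hf => hf.2 s) hequi
  obtain ⟨xt, hxtA, φ, hφ, hconv⟩ := hcpt.tendsto_subseq (fun m => subset_closure (hFA m))
  -- pointwise convergence
  have hpt : ∀ s (hs : s ∈ Icc (0:ℝ) (1/4)),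
      Tendsto (fun m => X (φ m) s) atTop (nhds (xt ⟨s, hs⟩)) := by
    intro s hs
    apply tendsto_iff_dist_tendsto_zero.2
    exact squeeze_zero (fun m => dist_nonneg)
      (fun m => BoundedContinuousFunction.dist_coe_le_dist (f := F (φ m)) (g := xt)
        (⟨s, hs⟩ : Icc (0:ℝ) (1/4)))
      (tendsto_iff_dist_tendsto_zero.1 hconv)
  set x : ℝ → EuclideanSpace ℝ (Fin n) :=
    fun s => xt (projIcc (0:ℝ) (1/4) (by norm_num) s) with hxdef
  have hxcont : Continuous x := xt.continuous.comp continuous_projIcc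
  have hxval : ∀ s (hs : s ∈ Icc (0:ℝ) (1/4)), x s = xt ⟨s, hs⟩ := by
    intro s hs
    exact congrArg xt (projIcc_of_mem (by norm_num) hs)
  have hxpt : ∀ s (hs : s ∈ Icc (0:ℝ) (1/4)),
      Tendsto (fun m => X (φ m) s) atTop (nhds (x s)) := by
    intro s hs
    rw [hxval s hs]
    exact hpt s hs
  -- limit of starting points is 0
  have hone : Tendsto (fun m : ℕ => 1/((m:ℝ)+1)) atTop (nhds 0) :=
    tendsto_one_div_add_atTop_nhds_zero_nat
  have hφm : ∀ m, (1:ℝ)/((φ m:ℝ)+1) ≤ 1/((m:ℝ)+1) := by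
    intro m
    apply one_div_le_one_div_of_le (by positivity)
    have : (m:ℝ) ≤ (φ m : ℝ) := Nat.cast_le.2 hφ.le_apply
    linarith
  have hqφ : Tendsto (fun m => q (φ m)) atTop (nhds 0) := by
    apply tendsto_zero_iff_norm_tendsto_zero.2
    apply squeeze_zero (fun m => norm_nonneg _) (fun m => (hqm (φ m)).trans (hφm m))
    exact hone
  have h0mem : (0:ℝ) ∈ Icc (0:ℝ) (1/4) := ⟨le_refl _, by norm_num⟩
  have hx0 : x 0 = 0 := by
    have h1 : Tendsto (fun m => X (φ m) 0) atTop (nhds (x 0)) := hxpt 0 h0mem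
    have h2 : Tendsto (fun m => X (φ m) 0) atTop (nhds 0) := by
      apply hqφ.congr
      intro m
      exact (hX0 (φ m)).symm
    exact tendsto_nhds_unique h1 h2
  -- limit norm bound and membership
  have hxnorm : ∀ s ∈ Icc (0:ℝ) (1/4), ‖x s‖ ≤ 3/8 := by
    intro s hs
    have h1 : Tendsto (fun m => ‖X (φ m) s‖) atTop (nhds ‖x s‖) :=
      ((continuous_norm.tendsto _).comp (hxpt s hs))
    exact le_of_tendsto h1 (Filter.Eventually.of_forall fun m => hXnorm (φ m) s hs)
  have hxmem : ∀ s ∈ Icc (0:ℝ) (1/4), x s ∈ ball (0 : EuclideanSpace ℝ (Fin n)) 1 := by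
    intro s hs
    rw [mem_ball, dist_eq_norm, sub_zero]
    linarith [hxnorm s hs]
  have hucont : ∀ s ∈ Icc (0:ℝ) (1/4), ContinuousAt u (x s) := by
    intro s hs
    exact (hC1.continuousOn).continuousAt (isOpen_ball.mem_nhds (hxmem s hs))
  -- limit sqrt lower bound
  have hxsqrt : ∀ s ∈ Icc (0:ℝ) (1/4), s/(2*β) ≤ Real.sqrt (u (x s)) := by
    intro s hs
    have h1 : Tendsto (fun m => Real.sqrt (u (X (φ m) s))) atTop
        (nhds (Real.sqrt (u (x s)))) :=
      (Real.continuous_sqrt.tendsto _).comp (((hucont s hs).tendsto).comp (hxpt s hs))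
    exact ge_of_tendsto h1 (Filter.Eventually.of_forall fun m => hXsqrt (φ m) s hs)
  -- limit norm vs sqrt bound
  have hxsq2 : ∀ s ∈ Icc (0:ℝ) (1/4), ‖x s‖ ≤ 2*β*Real.sqrt (u (x s)) := by
    intro s hs
    have hb : ∀ m, ‖X (φ m) s‖ ≤ ‖q (φ m)‖ + 2*β*Real.sqrt (u (X (φ m) s)) := by
      intro m
      have h1 := hXdist (φ m) s hs
      have h2 : ‖X (φ m) s‖ - ‖q (φ m)‖ ≤ ‖X (φ m) s - q (φ m)‖ := norm_sub_norm_le _ _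
      have h3 := hXsqrt (φ m) s hs
      have h4 : s ≤ 2*β*Real.sqrt (u (X (φ m) s)) := by
        rw [div_le_iff₀ (by positivity)] at h3
        linarith [h3]
      linarith
    have h1 : Tendsto (fun m => ‖X (φ m) s‖) atTop (nhds ‖x s‖) :=
      ((continuous_norm.tendsto _).comp (hxpt s hs))
    have h2 : Tendsto (fun m => ‖q (φ m)‖ + 2*β*Real.sqrt (u (X (φ m) s))) atTop
        (nhds (0 + 2*β*Real.sqrt (u (x s)))) := by
      apply Tendsto.add
      · exact squeeze_zero (fun m => norm_nonneg _)
          (fun m => (hqm (φ m)).trans (hφm m)) hone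
      · exact ((Real.continuous_sqrt.tendsto _).comp
          (((hucont s hs).tendsto).comp (hxpt s hs))).const_mul (2*β)
    have := le_of_tendsto_of_tendsto' h1 h2 hb
    linarith [this]
  have hxupos : ∀ s ∈ Ioc (0:ℝ) (1/4), 0 < u (x s) := by
    intro s hs
    have h1 := hxsqrt s ⟨hs.1.le, hs.2⟩
    have h2 : 0 < s/(2*β) := div_pos hs.1 (by positivity)
    exact Real.sqrt_pos.1 (lt_of_lt_of_le h2 h1)
  -- continuity of the vector field at relevant points
  have hVc : ∀ w ∈ ball (0 : EuclideanSpace ℝ (Fin n)) 1, 0 < u w →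
      ContinuousAt (nvf u) w := fun w hw hw2 => nvf_continuousAt hβ hLip hLoj' hw hw2
  have hXpos : ∀ m, ∀ σ ∈ Ioc (0:ℝ) (1/4), ∀ τ ∈ Icc σ (1/4), 0 < u (X m τ) := by
    intro m σ hσ τ hτ
    have h := hXsqrt m τ ⟨hσ.1.le.trans hτ.1, hτ.2⟩
    have h2 : 0 < τ/(2*β) := div_pos (lt_of_lt_of_le hσ.1 hτ.1) (by positivity)
    exact Real.sqrt_pos.1 (lt_of_lt_of_le h2 h)
  have hXmem : ∀ m, ∀ τ ∈ Icc (0:ℝ) (1/4),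
      X m τ ∈ ball (0 : EuclideanSpace ℝ (Fin n)) 1 := by
    intro m τ hτ
    rw [mem_ball, dist_eq_norm, sub_zero]
    linarith [hXnorm m τ hτ]
  have hfc : ∀ m, ∀ σ ∈ Ioc (0:ℝ) (1/4),
      ContinuousOn (fun τ => nvf u (X m τ)) (Icc σ (1/4)) := by
    intro m σ hσ τ hτ
    have h1 : ContinuousWithinAt (X m) (Icc σ (1/4)) τ :=
      ((hXcont m).mono (Icc_subset_Icc hσ.1.le (le_refl _))) τ hτ
    exact (hVc (X m τ) (hXmem m τ ⟨hσ.1.le.trans hτ.1, hτ.2⟩)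
      (hXpos m σ hσ τ hτ)).comp_continuousWithinAt h1
  -- integral identity for each curve, for large indices
  have hIEm : ∀ σ ∈ Ioc (0:ℝ) (1/4), ∀ m, 2*β*Real.sqrt (u (q m)) ≤ σ →
      ∀ s ∈ Icc σ (1/4), X m s = X m σ + ∫ τ in σ..s, nvf u (X m τ) := by
    intro σ hσ m hmσ s hs
    have hint : IntervalIntegrable (fun τ => nvf u (X m τ)) MeasureTheory.volume σ s := by
      apply ContinuousOn.intervalIntegrable
      apply (hfc m σ hσ).mono
      rw [uIcc_of_le hs.1]
      exact Icc_subset_Icc (le_refl _) hs.2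
    have hcontm : ContinuousOn (X m) (Icc σ s) :=
      (hXcont m).mono (Icc_subset_Icc hσ.1.le hs.2)
    have hderiv : ∀ τ ∈ Ioo σ s, HasDerivWithinAt (X m) (nvf u (X m τ)) (Ioi τ) τ := by
      intro τ hτ
      have hτmem : τ ∈ Icc (2*β*Real.sqrt (u (q m))) (1/4) :=
        ⟨hmσ.trans hτ.1.le, hτ.2.le.trans hs.2⟩
      have := (hXode m τ hτmem).hasDerivAt (Icc_mem_nhds
        (lt_of_le_of_lt hmσ hτ.1) (lt_of_lt_of_le hτ.2 hs.2))
      exact this.hasDerivWithinAt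
    have heq := intervalIntegral.integral_eq_sub_of_hasDeriv_right_of_le hs.1 hcontm hderiv hint
    rw [heq]
    abel
  -- integral identity for the limit curve
  have hIE : ∀ σ ∈ Ioc (0:ℝ) (1/4), ∀ s ∈ Icc σ (1/4),
      x s = x σ + ∫ τ in σ..s, nvf u (x τ) := by
    intro σ hσ s hs
    obtain ⟨N, hN⟩ := exists_nat_gt (1/σ)
    have hev : ∀ m ≥ N, 2*β*Real.sqrt (u (q (φ m))) ≤ σ := by
      intro m hm
      have h1 := (hqbm (φ m)).trans (hφm m)
      have h2 : 1/((m:ℝ)+1) ≤ σ := by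
        rw [div_le_iff₀ (by positivity)]
        have h3 : (N:ℝ) ≤ (m:ℝ) := Nat.cast_le.2 hm
        rw [div_lt_iff₀ hσ.1] at hN
        nlinarith [hσ.1]
      linarith
    have hmeas : ∀ m, MeasureTheory.AEStronglyMeasurable (fun τ => nvf u (X (φ m) τ))
        (MeasureTheory.volume.restrict (Ioc σ s)) := by
      intro m
      apply ContinuousOn.aestronglyMeasurable _ measurableSet_Ioc
      exact (hfc (φ m) σ hσ).mono
        ((Ioc_subset_Icc_self).trans (Icc_subset_Icc (le_refl _) hs.2))
    have hbound : ∀ m, ∀ᵐ τ ∂(MeasureTheory.volume.restrict (Ioc σ s)),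
        ‖nvf u (X (φ m) τ)‖ ≤ 1 :=
      fun m => MeasureTheory.ae_of_all _ (fun τ => norm_nvf_le_one u _)
    have hbi : MeasureTheory.Integrable (fun _ : ℝ => (1:ℝ))
        (MeasureTheory.volume.restrict (Ioc σ s)) := MeasureTheory.integrable_const _
    have hlim : ∀ᵐ τ ∂(MeasureTheory.volume.restrict (Ioc σ s)),
        Tendsto (fun m => nvf u (X (φ m) τ)) atTop (nhds (nvf u (x τ))) := by
      rw [MeasureTheory.ae_restrict_iff' measurableSet_Ioc]
      apply MeasureTheory.ae_of_all
      intro τ hτ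
      have hτ4 : τ ∈ Icc (0:ℝ) (1/4) := ⟨hσ.1.le.trans hτ.1.le, hτ.2.trans hs.2⟩
      exact ((hVc (x τ) (hxmem τ hτ4)
        (hxupos τ ⟨lt_of_lt_of_le hσ.1 hτ.1.le, hτ4.2⟩)).tendsto).comp (hxpt τ hτ4)
    have hitend : Tendsto (fun m => ∫ τ in Ioc σ s, nvf u (X (φ m) τ)) atTop
        (nhds (∫ τ in Ioc σ s, nvf u (x τ))) :=
      MeasureTheory.tendsto_integral_of_dominated_convergence _ hmeas hbi hbound hlim
    have h1 : Tendsto (fun m => X (φ m) s) atTop (nhds (x s)) :=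
      hxpt s ⟨hσ.1.le.trans hs.1, hs.2⟩
    have h2 : Tendsto (fun m => X (φ m) σ + ∫ τ in Ioc σ s, nvf u (X (φ m) τ)) atTop
        (nhds (x σ + ∫ τ in Ioc σ s, nvf u (x τ))) :=
      (hxpt σ ⟨hσ.1.le, hσ.2⟩).add hitend
    have h3 : (fun m => X (φ m) s) =ᶠ[atTop]
        (fun m => X (φ m) σ + ∫ τ in Ioc σ s, nvf u (X (φ m) τ)) := by
      rw [Filter.EventuallyEq, eventually_atTop]
      refine ⟨N, fun m hm => ?_⟩
      have := hIEm σ hσ (φ m) (hev m hm) s hs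
      rwa [intervalIntegral.integral_of_le hs.1] at this
    have h4 := tendsto_nhds_unique (h1.congr' h3) h2
    rw [intervalIntegral.integral_of_le hs.1]
    exact h4
  -- continuity of the field along the limit curve
  have hfa : ∀ τ ∈ Ioo (0:ℝ) (1/4), ContinuousAt (fun τ => nvf u (x τ)) τ := by
    intro τ hτ
    exact ((hVc (x τ) (hxmem τ ⟨hτ.1.le, hτ.2.le⟩)
      (hxupos τ ⟨hτ.1, hτ.2.le⟩)).comp (hxcont.continuousAt))
  -- the ODE for the limit curve
  have hODE : ∀ s ∈ Ioc (0:ℝ) (1/8), HasDerivAt x (nvf u (x s)) s := by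
    intro s hs
    have hσ : s/2 ∈ Ioc (0:ℝ) (1/4) := ⟨half_pos hs.1, by linarith [hs.2]⟩
    have hint : IntervalIntegrable (fun τ => nvf u (x τ)) MeasureTheory.volume (s/2) s := by
      apply ContinuousOn.intervalIntegrable
      intro τ hτ
      rw [uIcc_of_le (le_of_lt (half_lt_self hs.1))] at hτ
      exact (hfa τ ⟨lt_of_lt_of_le hσ.1 hτ.1,
        lt_of_le_of_lt hτ.2 (by linarith [hs.2])⟩).continuousWithinAt
    have hmeas2 : StronglyMeasurableAtFilter (fun τ => nvf u (x τ)) (nhds s)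
        MeasureTheory.volume :=
      ContinuousOn.stronglyMeasurableAtFilter isOpen_Ioo
        (fun τ hτ => (hfa τ hτ).continuousWithinAt) s
        (⟨hs.1, by linarith [hs.2]⟩ : s ∈ Ioo (0:ℝ) (1/4))
    have hG : HasDerivAt (fun t => x (s/2) + ∫ τ in (s/2)..t, nvf u (x τ)) (nvf u (x s)) s := by
      have := intervalIntegral.integral_hasDerivAt_right hint hmeas2
        (hfa s ⟨hs.1, by linarith [hs.2]⟩)
      exact this.const_add (x (s/2))
    have hloc : x =ᶠ[nhds s] (fun t => x (s/2) + ∫ τ in (s/2)..t, nvf u (x τ)) := by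
      have hmem : Ioo (s/2) (1/4) ∈ nhds s :=
        isOpen_Ioo.mem_nhds ⟨half_lt_self hs.1, by linarith [hs.2]⟩
      filter_upwards [hmem] with t ht
      exact hIE (s/2) hσ t ⟨ht.1.le, ht.2.le⟩
    exact hG.congr_of_eventuallyEq hloc
  -- conclusion
  refine ⟨1/8, by norm_num, x, ?_, ?_, hx0, ?_, ?_⟩
  · exact hxcont.continuousOn
  · have heq : EqOn (deriv x) (fun s => nvf u (x s)) (Ioc 0 (1/8)) :=
      fun s hs => (hODE s hs).deriv
    apply ContinuousOn.congr _ heq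
    intro s hs
    exact (hfa s ⟨hs.1, by linarith [hs.2]⟩).continuousWithinAt
  · intro s hs
    refine ⟨?_, hxupos s ⟨hs.1, by linarith [hs.2]⟩⟩
    have := hODE s hs
    simpa [nvf] using this
  · intro s hs
    have hs4 : s ∈ Icc (0:ℝ) (1/4) := ⟨hs.1, by linarith [hs.2]⟩
    constructor
    · rw [mem_closedBall, dist_eq_norm, sub_zero]
      linarith [hxnorm s hs4]
    · exact hxsq2 s hs4
end

section
/- Let u be C¹ with the Łojasiewicz inequality sqrt(−u(x)) ≤ β|∇u(x)| holding on a region R where u < 0, and let x : [0, ŝ) → R be a unit-speed integral curve of N = ∇u/|∇u| with u(x(0)) = u(p) < 0. Then sqrt(−u(p)) ≥ sqrt(−u(x(s))) + s/(2β) for all s ∈ [0, ŝ); in particular ŝ ≤ 2β·sqrt(−u(p)), and if x(s) → q ∈ R̄ as s → ŝ then |p − q| ≤ 2β·sqrt(−u(p)). -/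
open Metric Set

/-- arc-length bound along integral curves of the normalized gradient
under the Łojasiewicz inequality `√(-u) ≤ β|∇u|` on a region where `u < 0`. -/
theorem stmt_12 (n : ℕ) (u : EuclideanSpace ℝ (Fin n) → ℝ) (β : ℝ) (hβ : 0 < β)
    (R : Set (EuclideanSpace ℝ (Fin n))) (hC1 : ∀ y ∈ R, DifferentiableAt ℝ u y)
    (hneg : ∀ y ∈ R, u y < 0)
    (hLoj : ∀ y ∈ R, Real.sqrt (-u y) ≤ β * ‖gradient u y‖)
    (sHat : ℝ) (hsHat : 0 < sHat)
    (x : ℝ → EuclideanSpace ℝ (Fin n))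
    (hmem : ∀ s ∈ Ico 0 sHat, x s ∈ R)
    (hode : ∀ s ∈ Ico 0 sHat,
      HasDerivAt x (‖gradient u (x s)‖⁻¹ • gradient u (x s)) s) :
    (∀ s ∈ Ico 0 sHat,
      Real.sqrt (-u (x s)) + s / (2 * β) ≤ Real.sqrt (-u (x 0))) ∧
    sHat ≤ 2 * β * Real.sqrt (-u (x 0)) ∧
    ∀ q : EuclideanSpace ℝ (Fin n),
      Filter.Tendsto x (nhdsWithin sHat (Iio sHat)) (nhds q) →
      ‖x 0 - q‖ ≤ 2 * β * Real.sqrt (-u (x 0)) := by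
  -- basic facts
  have hsq : ∀ s ∈ Ico 0 sHat, 0 < Real.sqrt (-u (x s)) := fun s hs =>
    Real.sqrt_pos.2 (by have := hneg _ (hmem s hs); linarith)
  have hgpos : ∀ s ∈ Ico 0 sHat, 0 < ‖gradient u (x s)‖ := by
    intro s hs
    have h1 := hLoj _ (hmem s hs)
    have h2 := hsq s hs
    nlinarith
  -- derivative of sqrt (-u (x t))
  have key : ∀ s ∈ Ico 0 sHat,
      HasDerivAt (fun t => Real.sqrt (-u (x t)))
        (-(‖gradient u (x s)‖ / (2 * Real.sqrt (-u (x s))))) s := by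
    intro s hs
    have hyR := hmem s hs
    have hun : u (x s) < 0 := hneg _ hyR
    have hgrad : HasGradientAt u (gradient u (x s)) (x s) := (hC1 _ hyR).hasGradientAt
    have h1 : HasDerivAt (fun t => u (x t)) (‖gradient u (x s)‖) s := by
      have := hgrad.hasFDerivAt.comp_hasDerivAt s (hode s hs)
      have heq : (InnerProductSpace.toDual ℝ _ (gradient u (x s)))
          (‖gradient u (x s)‖⁻¹ • gradient u (x s)) = ‖gradient u (x s)‖ := by
        rw [InnerProductSpace.toDual_apply_apply, real_inner_smul_right,
          real_inner_self_eq_norm_sq]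
        have hg := hgpos s hs
        field_simp
      rw [← heq]
      exact this
    have h2 : HasDerivAt (fun t => -u (x t)) (-‖gradient u (x s)‖) s := h1.neg
    have hne : -u (x s) ≠ 0 := by linarith
    have h3 := (Real.hasDerivAt_sqrt hne).comp s h2
    rw [show -(‖gradient u (x s)‖ / (2 * Real.sqrt (-u (x s)))) = 1 / (2 * Real.sqrt (-u (x s))) * -‖gradient u (x s)‖ by ring]
    exact h3
  have hC0 : 0 ≤ 2 * β * Real.sqrt (-u (x 0)) := by
    have := hsq 0 ⟨le_refl 0, hsHat⟩
    positivity
  -- antitone of g t = sqrt(-u(x t)) + t/(2β)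
  have hanti : AntitoneOn (fun t => Real.sqrt (-u (x t)) + t / (2 * β)) (Ico 0 sHat) := by
    apply antitoneOn_of_hasDerivWithinAt_nonpos (convex_Ico 0 sHat)
      (f' := fun t => -(‖gradient u (x t)‖ / (2 * Real.sqrt (-u (x t)))) + 1 / (2 * β))
    · intro t ht
      exact ((key t ht).add ((hasDerivAt_id t).div_const (2 * β))).continuousAt.continuousWithinAt
    · intro t ht
      rw [interior_Ico] at ht
      have ht' : t ∈ Ico 0 sHat := Ioo_subset_Ico_self ht
      exact (((key t ht').add ((hasDerivAt_id t).div_const (2 * β))).hasDerivWithinAt)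
    · intro t ht
      rw [interior_Ico] at ht
      have ht' : t ∈ Ico 0 sHat := Ioo_subset_Ico_self ht
      have h1 := hLoj _ (hmem t ht')
      have h2 := hsq t ht'
      have h3 := hgpos t ht'
      have : 1 / (2 * β) ≤ ‖gradient u (x t)‖ / (2 * Real.sqrt (-u (x t))) := by
        rw [div_le_div_iff₀ (by positivity) (by positivity)]
        nlinarith
      linarith
  have part1 : ∀ s ∈ Ico 0 sHat,
      Real.sqrt (-u (x s)) + s / (2 * β) ≤ Real.sqrt (-u (x 0)) := by
    intro s hs
    have h0 : (0 : ℝ) ∈ Ico 0 sHat := ⟨le_refl 0, hsHat⟩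
    have := hanti h0 hs hs.1
    simpa using this
  refine ⟨part1, ?_, ?_⟩
  · -- sHat ≤ 2β√(-u(x 0))
    by_contra h
    push_neg at h
    set C := 2 * β * Real.sqrt (-u (x 0)) with hC
    have hs' : (C + sHat) / 2 ∈ Ico 0 sHat := ⟨by linarith, by linarith⟩
    have h1 := part1 _ hs'
    have h2 := hsq _ hs'
    have h3 : (C + sHat) / 2 / (2 * β) ≤ Real.sqrt (-u (x 0)) := by linarith
    rw [div_le_iff₀ (by positivity)] at h3
    nlinarith
  · -- limit bound
    intro q hq
    set C := 2 * β * Real.sqrt (-u (x 0)) with hC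
    have hbound : ∀ s ∈ Ico 0 sHat, ‖x 0 - x s‖ ≤ C := by
      intro s hs
      have hlip : ‖x s - x 0‖ ≤ 1 * ‖s - 0‖ := by
        apply (convex_Ico 0 sHat).norm_image_sub_le_of_norm_hasDerivWithin_le
          (fun t ht => (hode t ht).hasDerivWithinAt) ?_ ⟨le_refl 0, hsHat⟩ hs
        intro t ht
        have hg := hgpos t ht
        rw [norm_smul, norm_inv, norm_norm, inv_mul_cancel₀ (ne_of_gt hg)]
      have hsC : s ≤ C := by
        have h1 := part1 s hs
        have h2 := hsq s hs
        have : s / (2 * β) ≤ Real.sqrt (-u (x 0)) := by linarith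
        rw [div_le_iff₀ (by positivity)] at this
        linarith [this]
      calc ‖x 0 - x s‖ = ‖x s - x 0‖ := by rw [norm_sub_rev]
        _ ≤ 1 * ‖s - 0‖ := hlip
        _ = |s| := by simp
        _ = s := abs_of_nonneg hs.1
        _ ≤ C := hsC
    have hne : (nhdsWithin sHat (Iio sHat)).NeBot := nhdsLT_neBot sHat
    have htend : Filter.Tendsto (fun s => ‖x 0 - x s‖) (nhdsWithin sHat (Iio sHat))
        (nhds ‖x 0 - q‖) := (Filter.Tendsto.const_sub _ hq).norm
    apply le_of_tendsto htend
    have hIoo : Ioo 0 sHat ∈ nhdsWithin sHat (Iio sHat) := by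
      rw [mem_nhdsWithin]
      exact ⟨Ioi 0, isOpen_Ioi, hsHat, fun t ht => ⟨ht.1, ht.2⟩⟩
    filter_upwards [hIoo] with s hs
    exact hbound s ⟨le_of_lt hs.1, hs.2⟩
end
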